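/- arXiv:2601.05728 — 7 statements merged into one kernel-verified Lean document; each statement's English description precedes it below -/
import Mathlib

section
/- Let X be a random variable, D a {0,1}-valued random variable, Z a discrete random variable, and Y(d,z) integrable potential outcomes with Y = Y(d,z) on {D = d, Z = z}. Assume Y(d,z) ⟂ (D,Z) | X and P(D = d, Z = z | X) > 0 almost surely. Then E[Y(d,z)] = E[ Y · 1{D = d, Z = z} / P(D = d, Z = z | X) ]. -/
open MeasureTheory ProbabilityTheory Set Filter

open scoped Topology

/-- Per-ω factorization: if the conditional kernel makes `f` and the event `A` independent
(tested on rational `Iic` sets), then conditional expectations factor. -/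
lemma ipw_factor {Ω : Type*} {m' : MeasurableSpace Ω} [mΩ : MeasurableSpace Ω]
    [StandardBorelSpace Ω]
    (P : Measure Ω) [IsProbabilityMeasure P] (hm' : m' ≤ mΩ)
    {f : Ω → ℝ} {A : Set Ω} (hf : Measurable f) (hA : MeasurableSet A)
    (hindep : ∀ᵐ ω ∂P, ∀ r : ℚ,
      condExpKernel P m' ω (f ⁻¹' Set.Iic (r : ℝ) ∩ A) =
        condExpKernel P m' ω (f ⁻¹' Set.Iic (r : ℝ)) * condExpKernel P m' ω A)
    (φ : ℝ → ℝ) (hφ : Continuous φ) (hφi : Integrable (fun ω => φ (f ω)) P) :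
    P[A.indicator (fun ω => φ (f ω)) | m'] =ᵐ[P]
      fun ω => (P[A.indicator (fun _ => (1 : ℝ)) | m']) ω * (P[fun ω => φ (f ω) | m']) ω := by
  have h1 := condExp_ae_eq_integral_condExpKernel (μ := P) hm' (hφi.indicator hA)
  have h2 := condExp_ae_eq_integral_condExpKernel (μ := P) hm' hφi
  have h3 := condExpKernel_ae_eq_condExp (μ := P) hm' hA
  filter_upwards [h1, h2, h3, hindep] with ω e1 e2 e3 hiω
  rw [e1, e2, ← e3]
  set ν : Measure Ω := condExpKernel P m' ω with hν
  haveI : IsProbabilityMeasure ν := by rw [hν]; infer_instance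
  have hmap : Measure.map f (ν.restrict A) = (ν A) • Measure.map f ν := by
    haveI : IsFiniteMeasure (Measure.map f (ν.restrict A)) := by
      constructor
      rw [Measure.map_apply hf MeasurableSet.univ, Set.preimage_univ,
        Measure.restrict_apply_univ]
      exact measure_lt_top ν A
    haveI : IsFiniteMeasure ((ν A) • Measure.map f ν) := by
      constructor
      rw [Measure.smul_apply, smul_eq_mul]
      exact ENNReal.mul_lt_top (measure_lt_top ν A) (by
        rw [Measure.map_apply hf MeasurableSet.univ, Set.preimage_univ]
        exact measure_lt_top ν _)
    refine MeasureTheory.ext_of_generate_finite _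
      ((BorelSpace.measurable_eq (α := ℝ)).trans Real.borel_eq_generateFrom_Iic_rat)
      Real.isPiSystem_Iic_rat ?_ ?_
    · rintro s hs
      simp only [Set.mem_iUnion, Set.mem_singleton_iff] at hs
      obtain ⟨r, rfl⟩ := hs
      rw [Measure.map_apply hf measurableSet_Iic, Measure.smul_apply,
        Measure.map_apply hf measurableSet_Iic, Measure.restrict_apply (hf measurableSet_Iic),
        smul_eq_mul, hiω r, mul_comm]
    · rw [Measure.map_apply hf MeasurableSet.univ, Set.preimage_univ,
        Measure.restrict_apply_univ, Measure.smul_apply, Measure.map_apply hf MeasurableSet.univ,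
        Set.preimage_univ, measure_univ, smul_eq_mul, mul_one]
  calc ∫ y, A.indicator (fun ω' => φ (f ω')) y ∂ν
      = ∫ y in A, φ (f y) ∂ν := integral_indicator hA
    _ = ∫ x, φ x ∂(Measure.map f (ν.restrict A)) :=
        (integral_map hf.aemeasurable hφ.aestronglyMeasurable).symm
    _ = ∫ x, φ x ∂((ν A) • Measure.map f ν) := by rw [hmap]
    _ = (ν A).toReal • ∫ x, φ x ∂(Measure.map f ν) := integral_smul_measure _ _
    _ = (ν A).toReal * ∫ y, φ (f y) ∂ν := by
        rw [integral_map hf.aemeasurable hφ.aestronglyMeasurable, smul_eq_mul]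

lemma ipw_main {Ω : Type*} {m' : MeasurableSpace Ω} [mΩ : MeasurableSpace Ω]
    [StandardBorelSpace Ω] (P : Measure Ω) [IsProbabilityMeasure P] (hm' : m' ≤ mΩ)
    (Y Ypo : Ω → ℝ) {A : Set Ω} (hA : MeasurableSet A)
    (hYpoMeas : Measurable Ypo) (hYpoInt : Integrable Ypo P)
    (hcons : ∀ ω ∈ A, Y ω = Ypo ω)
    (hker : ∀ᵐ ω ∂P, ∀ r : ℚ,
      condExpKernel P m' ω (Ypo ⁻¹' Set.Iic (r : ℝ) ∩ A) =
        condExpKernel P m' ω (Ypo ⁻¹' Set.Iic (r : ℝ)) * condExpKernel P m' ω A)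
    (hpos : ∀ᵐ ω ∂P, 0 < (P[A.indicator (fun _ => (1 : ℝ)) | m']) ω) :
    ∫ ω, Ypo ω ∂P
      = ∫ ω, Y ω * A.indicator (fun _ => (1 : ℝ)) ω
          / (P[A.indicator (fun _ => (1 : ℝ)) | m']) ω ∂P := by
  classical
  set q : Ω → ℝ := P[A.indicator (fun _ => (1 : ℝ)) | m'] with hqdef
  have hq0 : ∀ᵐ ω ∂P, 0 < q ω := hpos
  -- factorization for Ypo and |Ypo|
  have key1 : P[A.indicator Ypo | m'] =ᵐ[P] fun ω => q ω * (P[Ypo | m']) ω :=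
    ipw_factor P hm' hYpoMeas hA hker (fun x => x) continuous_id hYpoInt
  have key2 : P[A.indicator (fun ω => |Ypo ω|) | m']
      =ᵐ[P] fun ω => q ω * (P[fun ω => |Ypo ω| | m']) ω :=
    ipw_factor P hm' hYpoMeas hA hker (fun x => |x|) continuous_abs hYpoInt.abs
  -- measurability facts
  have hqsm : StronglyMeasurable[m'] q := stronglyMeasurable_condExp
  have hqm : Measurable q := (hqsm.mono hm').measurable
  set g : Ω → ℝ := fun ω => (q ω)⁻¹ with hgdef
  have hgm : Measurable g := hqm.inv
  have hgsm : StronglyMeasurable[m'] g := hqsm.measurable.inv.stronglyMeasurable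
  have hg0ae : ∀ᵐ ω ∂P, 0 ≤ g ω := hq0.mono fun ω h => inv_nonneg.mpr h.le
  set absInd : Ω → ℝ := A.indicator (fun ω => |Ypo ω|) with habsInddef
  have habsIndInt : Integrable absInd P := hYpoInt.abs.indicator hA
  have habsIndMeas : Measurable absInd := hYpoMeas.abs.indicator hA
  have habsInd0 : ∀ ω, 0 ≤ absInd ω := fun ω =>
    Set.indicator_nonneg (fun _ _ => abs_nonneg _) ω
  set Fn : ℕ → Ω → ℝ := fun n => (fun ω => min (g ω) (n : ℝ)) * absInd with hFndef
  set F : Ω → ℝ := g * absInd with hFdef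
  have hFnInt : ∀ n : ℕ, Integrable (Fn n) P := by
    intro n
    refine Integrable.bdd_mul (c := (n : ℝ)) habsIndInt
      ((hgm.min measurable_const).aestronglyMeasurable) ?_
    filter_upwards [hg0ae] with ω hω
    have h0 : 0 ≤ min (g ω) (n : ℝ) := le_min hω (Nat.cast_nonneg n)
    rw [Real.norm_eq_abs, abs_of_nonneg h0]
    exact min_le_right _ _
  have hpAbs0 : 0 ≤ᵐ[P] P[fun ω => |Ypo ω| | m'] :=
    condExp_nonneg (Filter.Eventually.of_forall fun ω => abs_nonneg _)
  have hIntBound : ∀ n : ℕ, ∫ ω, Fn n ω ∂P ≤ ∫ ω, |Ypo ω| ∂P := by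
    intro n
    have e1 : ∫ ω, Fn n ω ∂P = ∫ ω, (P[Fn n | m']) ω ∂P := (integral_condExp hm').symm
    have e2 : P[Fn n | m'] =ᵐ[P] (fun ω => min (g ω) (n : ℝ)) * P[absInd | m'] :=
      condExp_mul_of_stronglyMeasurable_left
        ((hgsm.measurable.min measurable_const).stronglyMeasurable) (hFnInt n) habsIndInt
    have e3 : ∫ ω, (P[Fn n | m']) ω ∂P ≤ ∫ ω, (P[fun ω => |Ypo ω| | m']) ω ∂P := by
      refine integral_mono_ae integrable_condExp integrable_condExp ?_
      filter_upwards [e2, key2, hq0, hpAbs0, hg0ae] with ω h2 hk2 hq hp hg0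
      have h2' : (P[Fn n | m']) ω
          = min (g ω) (n : ℝ) * (P[absInd | m']) ω := h2
      rw [h2', hk2]
      have h1 : min (g ω) (n : ℝ) * q ω ≤ 1 := by
        calc min (g ω) (n : ℝ) * q ω ≤ g ω * q ω :=
              mul_le_mul_of_nonneg_right (min_le_left _ _) hq.le
          _ = 1 := inv_mul_cancel₀ hq.ne'
      have h0 : 0 ≤ min (g ω) (n : ℝ) * q ω :=
        mul_nonneg (le_min hg0 (Nat.cast_nonneg n)) hq.le
      have hp' : (0 : ℝ) ≤ (P[fun ω => |Ypo ω| | m']) ω := hp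
      calc min (g ω) (n : ℝ) * (q ω * (P[fun ω => |Ypo ω| | m']) ω)
          = (min (g ω) (n : ℝ) * q ω) * (P[fun ω => |Ypo ω| | m']) ω := by ring
        _ ≤ 1 * (P[fun ω => |Ypo ω| | m']) ω := mul_le_mul_of_nonneg_right h1 hp'
        _ = (P[fun ω => |Ypo ω| | m']) ω := one_mul _
    rw [e1]
    exact e3.trans_eq (integral_condExp hm')
  have hmono : ∀ᵐ ω ∂P, Monotone fun n : ℕ => ENNReal.ofReal (Fn n ω) := by
    filter_upwards [hg0ae] with ω _
    intro n m hnm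
    apply ENNReal.ofReal_le_ofReal
    exact mul_le_mul_of_nonneg_right (min_le_min le_rfl (Nat.cast_le.mpr hnm)) (habsInd0 ω)
  have htendpt : ∀ᵐ ω ∂P, Filter.Tendsto (fun n : ℕ => ENNReal.ofReal (Fn n ω))
      Filter.atTop (nhds (ENNReal.ofReal (F ω))) := by
    refine Filter.Eventually.of_forall fun ω => ?_
    apply tendsto_atTop_of_eventually_const (i₀ := ⌈g ω⌉₊)
    intro n hn
    have hmin : min (g ω) (n : ℝ) = g ω :=
      min_eq_left ((Nat.le_ceil _).trans (Nat.cast_le.mpr hn))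
    show ENNReal.ofReal (min (g ω) (n : ℝ) * absInd ω) = ENNReal.ofReal (g ω * absInd ω)
    rw [hmin]
  have hlim := lintegral_tendsto_of_tendsto_of_monotone
    (fun n => ((hgm.min measurable_const).mul habsIndMeas).ennreal_ofReal.aemeasurable)
    hmono htendpt
  have hFnonneg : 0 ≤ᵐ[P] F := hg0ae.mono fun ω h => mul_nonneg h (habsInd0 ω)
  have hFnnonneg : ∀ n : ℕ, 0 ≤ᵐ[P] Fn n := fun n =>
    hg0ae.mono fun ω h => mul_nonneg (le_min h (Nat.cast_nonneg n)) (habsInd0 ω)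
  have hFbound : ∫⁻ ω, ENNReal.ofReal (F ω) ∂P ≤ ENNReal.ofReal (∫ ω, |Ypo ω| ∂P) := by
    refine le_of_tendsto' hlim fun n => ?_
    show (∫⁻ x, ENNReal.ofReal (Fn n x) ∂P) ≤ ENNReal.ofReal (∫ ω, |Ypo ω| ∂P)
    rw [← ofReal_integral_eq_lintegral_ofReal (hFnInt n) (hFnnonneg n)]
    exact ENNReal.ofReal_le_ofReal (hIntBound n)
  have hFInt : Integrable F P := by
    refine ⟨(hgm.mul habsIndMeas).aestronglyMeasurable, ?_⟩
    rw [hasFiniteIntegral_iff_ofReal hFnonneg]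
    exact lt_of_le_of_lt hFbound ENNReal.ofReal_lt_top
  set h : Ω → ℝ := g * A.indicator Ypo with hhdef
  have hhInt : Integrable h P := by
    refine Integrable.mono' hFInt
      ((hgm.mul (hYpoMeas.indicator hA)).aestronglyMeasurable) ?_
    filter_upwards [hq0] with ω hq
    have habs : |A.indicator Ypo ω| = absInd ω := by
      by_cases hω : ω ∈ A
      · simp [habsInddef, Set.indicator_of_mem hω]
      · simp [habsInddef, Set.indicator_of_notMem hω]
    show ‖g ω * A.indicator Ypo ω‖ ≤ g ω * absInd ω
    rw [Real.norm_eq_abs, abs_mul, habs, abs_of_nonneg (inv_nonneg.mpr hq.le)]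
  have hAInt : Integrable (A.indicator Ypo) P := hYpoInt.indicator hA
  have e2 : P[h | m'] =ᵐ[P] g * P[A.indicator Ypo | m'] :=
    condExp_mul_of_stronglyMeasurable_left hgsm hhInt hAInt
  have e3 : (g * P[A.indicator Ypo | m'] : Ω → ℝ) =ᵐ[P] P[Ypo | m'] := by
    filter_upwards [key1, hq0] with ω hk hq
    show g ω * (P[A.indicator Ypo | m']) ω = (P[Ypo | m']) ω
    rw [hk, ← mul_assoc]
    show (q ω)⁻¹ * q ω * (P[Ypo | m']) ω = (P[Ypo | m']) ω
    rw [inv_mul_cancel₀ hq.ne', one_mul]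
  have hmain : ∫ ω, h ω ∂P = ∫ ω, Ypo ω ∂P := by
    rw [← integral_condExp hm' (f := h), integral_congr_ae (e2.trans e3)]
    exact integral_condExp hm'
  rw [← hmain]
  refine integral_congr_ae (Filter.Eventually.of_forall fun ω => ?_)
  show g ω * A.indicator Ypo ω = Y ω * A.indicator (fun _ => (1 : ℝ)) ω / q ω
  by_cases hω : ω ∈ A
  · rw [Set.indicator_of_mem hω, Set.indicator_of_mem hω, hcons ω hω,
      mul_one, div_eq_inv_mul]
  · rw [Set.indicator_of_notMem hω, Set.indicator_of_notMem hω]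
    simp


/-- Conditional (selection-on-observables) IPW identification of the mean potential
outcome: conditioning on covariates `X` renders the treatment-exposure pair exogenous. -/
theorem stmt_1 {Ω : Type*} [MeasurableSpace Ω] [StandardBorelSpace Ω]
    (P : Measure Ω) [IsProbabilityMeasure P]
    (Y Ypo : Ω → ℝ) (D : Ω → ℕ) (Z : Ω → ℤ) (X : Ω → ℝ) (d : ℕ) (z : ℤ)
    (hD : Measurable D) (hZ : Measurable Z) (hX : Measurable X) (hYpoMeas : Measurable Ypo)
    (hDbin : ∀ ω, D ω = 0 ∨ D ω = 1)
    (hYint : Integrable Y P) (hYpoInt : Integrable Ypo P)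
    (hcons : ∀ ω, D ω = d → Z ω = z → Y ω = Ypo ω)
    (hcondindep : CondIndepFun (MeasurableSpace.comap X inferInstance) hX.comap_le
      Ypo (fun ω => (D ω, Z ω)) P)
    (hpos : ∀ᵐ ω ∂P,
      0 < (P[({ω' | D ω' = d ∧ Z ω' = z}).indicator (fun _ => (1 : ℝ))
            | MeasurableSpace.comap X inferInstance]) ω) :
    ∫ ω, Ypo ω ∂P
      = ∫ ω, Y ω * ({ω' | D ω' = d ∧ Z ω' = z}).indicator (fun _ => (1 : ℝ)) ω
          / (P[({ω' | D ω' = d ∧ Z ω' = z}).indicator (fun _ => (1 : ℝ))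
              | MeasurableSpace.comap X inferInstance]) ω ∂P := by
  classical
  have hm' : MeasurableSpace.comap X inferInstance ≤ ‹MeasurableSpace Ω› := hX.comap_le
  have hApre : (fun ω => (D ω, Z ω)) ⁻¹' {(d, z)} = {ω' | D ω' = d ∧ Z ω' = z} := by
    ext ω; simp [Prod.ext_iff]
  have hA : MeasurableSet {ω' | D ω' = d ∧ Z ω' = z} := by
    rw [← hApre]; exact (hD.prodMk hZ) (measurableSet_singleton _)
  refine ipw_main P hm' Y Ypo hA hYpoMeas hYpoInt (fun ω hω => hcons ω hω.1 hω.2) ?_ hpos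
  rw [ae_all_iff]
  intro r
  have h := Kernel.IndepFun.measure_inter_preimage_eq_mul
    (κ := condExpKernel P (MeasurableSpace.comap X inferInstance)) (μ := P.trim hm') hcondindep
    (Set.Iic (r : ℝ)) {(d, z)} measurableSet_Iic (measurableSet_singleton _)
  rw [hApre] at h
  exact ae_of_ae_trim hm' h
end

section
/- Let Y be integrable, D ∈ {0,1}, Z discrete, X a random variable. Define μ(d,z,X) = E[Y | D = d, Z = z, X] and p(d,z | X) = P(D = d, Z = z | X) > 0 a.s. Suppose potential outcomes Y(d,z) satisfy consistency (Y = Y(d,z) on {D=d,Z=z}) and conditional exogeneity Y(d,z) ⟂ (D,Z) | X. Then E[Y(d,z)] = E[ μ(d,z,X) + (1{D=d, Z=z} / p(d,z|X)) · (Y − μ(d,z,X)) ]. -/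
open MeasureTheory ProbabilityTheory Set

lemma aux_int_mul {Ω : Type*} {m m0 : MeasurableSpace Ω} (hm : m ≤ m0)
    (P : Measure Ω) [IsProbabilityMeasure P]
    {w r b : Ω → ℝ} (hw : Measurable[m] w) (hw0 : ∀ ω, 0 ≤ w ω) (hr0 : ∀ ω, 0 ≤ r ω)
    (hr : Integrable r P) (hb : Integrable b P)
    (hbound : (fun ω => w ω * (P[r|m]) ω) ≤ᵐ[P] b) :
    Integrable (fun ω => w ω * r ω) P := by
  have hwm0 : Measurable w := hw.mono hm le_rfl
  set wn : ℕ → Ω → ℝ := fun n ω => min (w ω) n with hwn_def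
  have hwn_meas : ∀ n, Measurable[m] (wn n) := fun n => hw.min measurable_const
  have hwn_nonneg : ∀ n ω, 0 ≤ wn n ω := fun n ω => le_min (hw0 ω) (n.cast_nonneg)
  have hwn_le : ∀ n ω, wn n ω ≤ w ω := fun n ω => min_le_left _ _
  have hwn_int : ∀ n, Integrable (fun ω => wn n ω * r ω) P := by
    intro n
    refine Integrable.mono' (hr.const_mul n)
      (((hwn_meas n).mono hm le_rfl).aestronglyMeasurable.mul hr.1) ?_
    refine Filter.Eventually.of_forall fun ω => ?_
    rw [Real.norm_eq_abs, abs_mul, abs_of_nonneg (hwn_nonneg n ω), abs_of_nonneg (hr0 ω)]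
    exact mul_le_mul_of_nonneg_right (min_le_right _ _) (hr0 ω)
  have hcond_nonneg : 0 ≤ᵐ[P] P[r|m] :=
    condExp_nonneg (Filter.Eventually.of_forall hr0)
  have key : ∀ n, ∫ ω, wn n ω * r ω ∂P ≤ ∫ ω, b ω ∂P := by
    intro n
    have h1 : P[fun ω => wn n ω * r ω|m] =ᵐ[P] fun ω => wn n ω * (P[r|m]) ω :=
      condExp_mul_of_stronglyMeasurable_left ((hwn_meas n).stronglyMeasurable) (hwn_int n) hr
    have h2 : Integrable (fun ω => wn n ω * (P[r|m]) ω) P := by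
      refine Integrable.mono' ((integrable_condExp (m := m) (f := r)).norm.const_mul n)
        (((hwn_meas n).mono hm le_rfl).aestronglyMeasurable.mul
          (stronglyMeasurable_condExp.mono hm).aestronglyMeasurable) ?_
      refine Filter.Eventually.of_forall fun ω => ?_
      rw [Real.norm_eq_abs, abs_mul, abs_of_nonneg (hwn_nonneg n ω)]
      exact mul_le_mul_of_nonneg_right (min_le_right _ _) (abs_nonneg _)
    calc ∫ ω, wn n ω * r ω ∂P = ∫ ω, (P[fun ω => wn n ω * r ω|m]) ω ∂P :=
          (integral_condExp hm).symm
      _ = ∫ ω, wn n ω * (P[r|m]) ω ∂P := integral_congr_ae h1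
      _ ≤ ∫ ω, b ω ∂P := by
          refine integral_mono_ae h2 hb ?_
          filter_upwards [hbound, hcond_nonneg] with ω h3 h4
          exact le_trans (mul_le_mul_of_nonneg_right (hwn_le n ω) h4) h3
  refine ⟨hwm0.aestronglyMeasurable.mul hr.1, ?_⟩
  rw [hasFiniteIntegral_iff_ofReal
    (Filter.Eventually.of_forall fun ω => mul_nonneg (hw0 ω) (hr0 ω))]
  have hsup : ∀ ω, (⨆ n, ENNReal.ofReal (wn n ω * r ω)) = ENNReal.ofReal (w ω * r ω) := by
    intro ω
    refine le_antisymm (iSup_le fun n =>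
      ENNReal.ofReal_le_ofReal (mul_le_mul_of_nonneg_right (hwn_le n ω) (hr0 ω))) ?_
    refine le_trans (le_of_eq ?_) (le_iSup (fun n => ENNReal.ofReal (wn n ω * r ω)) ⌈w ω⌉₊)
    have : wn ⌈w ω⌉₊ ω = w ω := min_eq_left (Nat.le_ceil _)
    rw [this]
  calc ∫⁻ ω, ENNReal.ofReal (w ω * r ω) ∂P
      = ∫⁻ ω, ⨆ n, ENNReal.ofReal (wn n ω * r ω) ∂P := by simp_rw [hsup]
    _ = ⨆ n, ∫⁻ ω, ENNReal.ofReal (wn n ω * r ω) ∂P := by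
        refine lintegral_iSup' (fun n => ENNReal.measurable_ofReal.comp_aemeasurable
          ((((hwn_meas n).mono hm le_rfl)).aemeasurable.mul hr.1.aemeasurable)) ?_
        refine Filter.Eventually.of_forall fun ω i j hij => ?_
        exact ENNReal.ofReal_le_ofReal (mul_le_mul_of_nonneg_right
          (min_le_min le_rfl (Nat.cast_le.2 hij)) (hr0 ω))
    _ ≤ ENNReal.ofReal (∫ ω, b ω ∂P) := by
        refine iSup_le fun n => ?_
        rw [← ofReal_integral_eq_lintegral_ofReal (hwn_int n)
          (Filter.Eventually.of_forall fun ω => mul_nonneg (hwn_nonneg n ω) (hr0 ω))]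
        exact ENNReal.ofReal_le_ofReal (key n)
    _ < ⊤ := ENNReal.ofReal_lt_top
theorem aux_main {Ω : Type*} (m : MeasurableSpace Ω) {mΩ : MeasurableSpace Ω}
    [StandardBorelSpace Ω] (hm : m ≤ mΩ) (P : Measure Ω) [IsProbabilityMeasure P]
    (Y Ypo : Ω → ℝ) (DZ : Ω → ℕ × ℤ) (dz : ℕ × ℤ) (hDZ : Measurable DZ)
    (hYpoMeas : Measurable Ypo) (hYpoInt : Integrable Ypo P)
    (hcondindep : CondIndepFun m hm Ypo DZ P)
    {A : Set Ω} (hA_eq : DZ ⁻¹' {dz} = A)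
    (hYI_eq : ∀ ω, Y ω * A.indicator (fun _ => (1 : ℝ)) ω
      = Ypo ω * A.indicator (fun _ => (1 : ℝ)) ω)
    (ps : Ω → ℝ) (hps : ps =ᵐ[P] P[A.indicator (fun _ => (1 : ℝ))|m])
    (hpos : ∀ᵐ ω ∂P, 0 < ps ω)
    (μfn : Ω → ℝ)
    (hμ : μfn =ᵐ[P] fun ω =>
      (P[fun ω' => Y ω' * A.indicator (fun _ => (1 : ℝ)) ω'|m]) ω / ps ω) :
    ∫ ω, Ypo ω ∂P
      = ∫ ω, μfn ω + (A.indicator (fun _ => (1 : ℝ)) ω / ps ω) * (Y ω - μfn ω) ∂P := by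
  have hA : MeasurableSet A := hA_eq ▸ hDZ (measurableSet_singleton dz)
  set I : Ω → ℝ := A.indicator (fun _ => (1 : ℝ)) with hI_def
  have hI_meas : Measurable I := measurable_const.indicator hA
  have hI01 : ∀ ω, 0 ≤ I ω ∧ I ω ≤ 1 := by
    intro ω
    by_cases h : ω ∈ A <;> simp [hI_def, Set.indicator_of_mem, Set.indicator_of_notMem, h]
  have hIint : Integrable I P := (integrable_const (1 : ℝ)).indicator hA
  -- the conditional expectation kernel
  set κ := condExpKernel P m with hκ_def
  set q : Ω → ℝ := fun ω => (κ ω A).toReal with hq_def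
  have hq_meas : Measurable[m] q :=
    ENNReal.measurable_toReal.comp (measurable_condExpKernel hA)
  have hq_nonneg : ∀ ω, 0 ≤ q ω := fun ω => ENNReal.toReal_nonneg
  have hqI : q =ᵐ[P] P[I|m] := condExpKernel_ae_eq_condExp hm hA
  have hpsq : ps =ᵐ[P] q := hps.trans hqI.symm
  have hq_pos : ∀ᵐ ω ∂P, 0 < q ω := by
    filter_upwards [hpos, hpsq] with ω h1 h2
    rw [← h2]; exact h1
  -- kernel independence: the conditional law of Ypo restricted to A factorizes
  have hker : ∀ᵐ ω ∂P, ∀ n : ℚ,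
      κ ω (Ypo ⁻¹' (Iic (n : ℝ)) ∩ A) = κ ω (Ypo ⁻¹' (Iic (n : ℝ))) * κ ω A := by
    refine ae_of_ae_trim hm (ae_all_iff.2 fun n => ?_)
    have h := Kernel.indepFun_iff_measure_inter_preimage_eq_mul.mp hcondindep
      (Iic (n : ℝ)) {dz} measurableSet_Iic (measurableSet_singleton _)
    rw [hA_eq] at h
    exact h
  have hmap : ∀ᵐ ω ∂P,
      Measure.map Ypo ((κ ω).restrict A) = κ ω A • Measure.map Ypo (κ ω) := by
    filter_upwards [hker] with ω hω
    haveI : IsFiniteMeasure (Measure.map Ypo ((κ ω).restrict A)) :=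
      Measure.isFiniteMeasure_map _ _
    refine ext_of_generate_finite _
      ((BorelSpace.measurable_eq (α := ℝ)).trans Real.borel_eq_generateFrom_Iic_rat)
      Real.isPiSystem_Iic_rat ?_ ?_
    · rintro s hs
      simp only [Set.mem_iUnion, Set.mem_singleton_iff] at hs
      obtain ⟨n, rfl⟩ := hs
      rw [Measure.map_apply hYpoMeas measurableSet_Iic,
        Measure.restrict_apply (hYpoMeas measurableSet_Iic), Measure.smul_apply,
        Measure.map_apply hYpoMeas measurableSet_Iic, smul_eq_mul, hω n, mul_comm]
    · rw [Measure.map_apply hYpoMeas MeasurableSet.univ, Set.preimage_univ,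
        Measure.restrict_apply_univ, Measure.smul_apply,
        Measure.map_apply hYpoMeas MeasurableSet.univ, Set.preimage_univ,
        measure_univ, smul_eq_mul, mul_one]
  -- key product formula for conditional expectations
  have key : ∀ φ : ℝ → ℝ, Measurable φ → Integrable (fun ω => φ (Ypo ω)) P →
      Integrable (fun ω => φ (Ypo ω) * I ω) P ∧
      P[fun ω => φ (Ypo ω) * I ω|m] =ᵐ[P]
        fun ω => q ω * (P[fun ω' => φ (Ypo ω')|m]) ω := by
    intro φ hφ hφint
    have hφI_int : Integrable (fun ω => φ (Ypo ω) * I ω) P := by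
      refine hφint.norm.mono' (hφint.1.mul hI_meas.aestronglyMeasurable) ?_
      refine Filter.Eventually.of_forall fun ω => ?_
      rw [Real.norm_eq_abs, abs_mul, Real.norm_eq_abs]
      calc |φ (Ypo ω)| * |I ω| ≤ |φ (Ypo ω)| * 1 := by
            refine mul_le_mul_of_nonneg_left ?_ (abs_nonneg _)
            rw [abs_of_nonneg (hI01 ω).1]; exact (hI01 ω).2
        _ = |φ (Ypo ω)| := mul_one _
    refine ⟨hφI_int, ?_⟩
    have h1 : P[fun ω => φ (Ypo ω) * I ω|m] =ᵐ[P]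
        fun ω => ∫ y, φ (Ypo y) * I y ∂(κ ω) :=
      condExp_ae_eq_integral_condExpKernel hm hφI_int
    have h2 : P[fun ω' => φ (Ypo ω')|m] =ᵐ[P] fun ω => ∫ y, φ (Ypo y) ∂(κ ω) :=
      condExp_ae_eq_integral_condExpKernel hm hφint
    refine h1.trans ?_
    have h3 : (fun ω => ∫ y, φ (Ypo y) * I y ∂(κ ω)) =ᵐ[P]
        fun ω => q ω * ∫ y, φ (Ypo y) ∂(κ ω) := by
      filter_upwards [hmap] with ω hω
      have hind : (fun y => φ (Ypo y) * I y) = A.indicator (fun y => φ (Ypo y)) := by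
        funext y
        by_cases h : y ∈ A <;>
          simp [hI_def, Set.indicator_of_mem, Set.indicator_of_notMem, h]
      rw [hind, integral_indicator hA]
      have e1 : ∫ y in A, φ (Ypo y) ∂(κ ω)
          = ∫ x, φ x ∂(Measure.map Ypo ((κ ω).restrict A)) :=
        (integral_map hYpoMeas.aemeasurable hφ.aestronglyMeasurable).symm
      have e2 : ∫ y, φ (Ypo y) ∂(κ ω) = ∫ x, φ x ∂(Measure.map Ypo (κ ω)) :=
        (integral_map hYpoMeas.aemeasurable hφ.aestronglyMeasurable).symm
      rw [e1, e2, hω, integral_smul_measure, smul_eq_mul]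
    refine h3.trans ?_
    filter_upwards [h2] with ω hω
    rw [hω]
  obtain ⟨hYpoI_int, hYpoK⟩ := key (fun x => x) measurable_id hYpoInt
  obtain ⟨hAbsI_int, hAbsK⟩ := key (fun x => |x|) (continuous_abs.measurable) hYpoInt.abs
  -- the conditional mean
  set g : Ω → ℝ := P[Ypo|m] with hg_def
  have hg_sm : StronglyMeasurable[m] g := stronglyMeasurable_condExp
  have hg_meas : Measurable g := (hg_sm.mono hm).measurable
  have hg_int : Integrable g P := integrable_condExp
  set u : Ω → ℝ := P[(fun ω => |Ypo ω|)|m] with hu_def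
  have hu_int : Integrable u P := integrable_condExp
  -- μfn equals g a.e.
  have hμfn_g : μfn =ᵐ[P] g := by
    have hfe : (fun ω' => Y ω' * I ω') = fun ω' => Ypo ω' * I ω' := funext hYI_eq
    refine hμ.trans ?_
    rw [hfe]
    filter_upwards [hYpoK, hpsq, hq_pos] with ω h1 h2 h3
    rw [h1, h2, mul_comm (q ω) (g ω), mul_div_assoc, div_self (ne_of_gt h3), mul_one]
  -- integrability of the weighted terms
  have hw0 : ∀ ω, 0 ≤ (q ω)⁻¹ := fun ω => inv_nonneg.2 (hq_nonneg ω)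
  have hInt1 : Integrable (fun ω => (q ω)⁻¹ * (|Ypo ω| * I ω)) P := by
    refine aux_int_mul hm P hq_meas.inv hw0
      (fun ω => mul_nonneg (abs_nonneg _) (hI01 ω).1) hAbsI_int hu_int ?_
    filter_upwards [hAbsK, hq_pos] with ω h1 h2
    rw [h1, inv_mul_cancel_left₀ (ne_of_gt h2)]
  have hIntY : Integrable (fun ω => (q ω)⁻¹ * (Ypo ω * I ω)) P := by
    refine hInt1.mono' (((hq_meas.inv.mono hm le_rfl).mul
      (hYpoMeas.mul hI_meas)).aestronglyMeasurable) ?_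
    refine Filter.Eventually.of_forall fun ω => ?_
    rw [Real.norm_eq_abs, abs_mul, abs_mul, abs_of_nonneg (hw0 ω),
      abs_of_nonneg (hI01 ω).1]
  have hr2_int : Integrable (fun ω => |g ω| * I ω) P := by
    refine hg_int.abs.mono' ((hg_meas.abs.mul hI_meas).aestronglyMeasurable) ?_
    refine Filter.Eventually.of_forall fun ω => ?_
    rw [Real.norm_eq_abs, abs_mul, abs_abs, abs_of_nonneg (hI01 ω).1]
    calc |g ω| * I ω ≤ |g ω| * 1 := mul_le_mul_of_nonneg_left (hI01 ω).2 (abs_nonneg _)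
      _ = |g ω| := mul_one _
  have hgIK : P[fun ω => |g ω| * I ω|m] =ᵐ[P] fun ω => |g ω| * q ω := by
    have h1 : P[fun ω => |g ω| * I ω|m] =ᵐ[P] fun ω => |g ω| * (P[I|m]) ω :=
      condExp_mul_of_stronglyMeasurable_left (continuous_abs.comp_stronglyMeasurable hg_sm) hr2_int hIint
    refine h1.trans ?_
    filter_upwards [hqI] with ω h2
    rw [← h2]
  have hInt2 : Integrable (fun ω => (q ω)⁻¹ * (|g ω| * I ω)) P := by
    refine aux_int_mul hm P hq_meas.inv hw0
      (fun ω => mul_nonneg (abs_nonneg _) (hI01 ω).1) hr2_int hg_int.abs ?_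
    have h1 : P[fun ω => |g ω| * I ω|m] =ᵐ[P] fun ω => |g ω| * q ω := hgIK
    filter_upwards [h1, hq_pos] with ω h2 h3
    rw [h2, mul_comm (|g ω|) (q ω), inv_mul_cancel_left₀ (ne_of_gt h3)]
  have hIntg : Integrable (fun ω => ((q ω)⁻¹ * g ω) * I ω) P := by
    refine hInt2.mono' ((((hq_meas.inv.mono hm le_rfl).mul hg_meas).mul
      hI_meas).aestronglyMeasurable) ?_
    refine Filter.Eventually.of_forall fun ω => ?_
    rw [Real.norm_eq_abs, abs_mul, abs_mul, abs_of_nonneg (hw0 ω),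
      abs_of_nonneg (hI01 ω).1, mul_assoc]
  -- compute the two integrals
  have hF1 : ∫ ω, (q ω)⁻¹ * (Ypo ω * I ω) ∂P = ∫ ω, g ω ∂P := by
    have e1 : P[fun ω => (q ω)⁻¹ * (Ypo ω * I ω)|m] =ᵐ[P]
        fun ω => (q ω)⁻¹ * (P[fun ω => Ypo ω * I ω|m]) ω :=
      condExp_mul_of_stronglyMeasurable_left (hq_meas.inv.stronglyMeasurable) hIntY hYpoI_int
    have e2 : P[fun ω => (q ω)⁻¹ * (Ypo ω * I ω)|m] =ᵐ[P] g := by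
      refine e1.trans ?_
      filter_upwards [hYpoK, hq_pos] with ω h1 h2
      rw [h1, inv_mul_cancel_left₀ (ne_of_gt h2)]
    have e3 := integral_condExp (μ := P) hm (f := fun ω => (q ω)⁻¹ * (Ypo ω * I ω))
    rw [← e3]
    exact integral_congr_ae e2
  have hF2 : ∫ ω, ((q ω)⁻¹ * g ω) * I ω ∂P = ∫ ω, g ω ∂P := by
    have e1 : P[fun ω => ((q ω)⁻¹ * g ω) * I ω|m] =ᵐ[P]
        fun ω => ((q ω)⁻¹ * g ω) * (P[I|m]) ω :=
      condExp_mul_of_stronglyMeasurable_left (hq_meas.inv.stronglyMeasurable.mul hg_sm) hIntg hIint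
    have e2 : P[fun ω => ((q ω)⁻¹ * g ω) * I ω|m] =ᵐ[P] g := by
      refine e1.trans ?_
      filter_upwards [hqI, hq_pos] with ω h1 h2
      rw [← h1, mul_comm ((q ω)⁻¹ * g ω) (q ω), ← mul_assoc,
        mul_inv_cancel₀ (ne_of_gt h2), one_mul]
    have e3 := integral_condExp (μ := P) hm (f := fun ω => ((q ω)⁻¹ * g ω) * I ω)
    rw [← e3]
    exact integral_congr_ae e2
  have hgYpo : ∫ ω, g ω ∂P = ∫ ω, Ypo ω ∂P := integral_condExp hm
  -- rewrite the integrand a.e. and conclude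
  have hint_eq : (fun ω => μfn ω + (I ω / ps ω) * (Y ω - μfn ω)) =ᵐ[P]
      fun ω => g ω + ((q ω)⁻¹ * (Ypo ω * I ω) - ((q ω)⁻¹ * g ω) * I ω) := by
    filter_upwards [hμfn_g, hpsq] with ω h1 h2
    rw [h1, h2]
    have hYI := hYI_eq ω
    simp only [div_eq_mul_inv]
    linear_combination (q ω)⁻¹ * hYI
  calc ∫ ω, Ypo ω ∂P
      = ∫ ω, g ω ∂P + (∫ ω, (q ω)⁻¹ * (Ypo ω * I ω) ∂P
          - ∫ ω, ((q ω)⁻¹ * g ω) * I ω ∂P) := by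
        rw [hF1, hF2, sub_self, add_zero, hgYpo]
    _ = ∫ ω, g ω + ((q ω)⁻¹ * (Ypo ω * I ω) - ((q ω)⁻¹ * g ω) * I ω) ∂P := by
        have hsub : Integrable
            (fun ω => (q ω)⁻¹ * (Ypo ω * I ω) - ((q ω)⁻¹ * g ω) * I ω) P :=
          hIntY.sub hIntg
        rw [← integral_sub hIntY hIntg]
        exact (integral_add hg_int hsub).symm
    _ = ∫ ω, μfn ω + (I ω / ps ω) * (Y ω - μfn ω) ∂P := (integral_congr_ae hint_eq).symm

/-- Doubly robust (AIPW) identification of the mean potential outcome `E[Y(d,z)]`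
under interference captured by an exposure `Z`: `μ` is the true conditional mean
outcome given `(D = d, Z = z, X)` and `p` the true joint propensity score. -/
theorem stmt_3 {Ω : Type*} [MeasurableSpace Ω] [StandardBorelSpace Ω]
    (P : Measure Ω) [IsProbabilityMeasure P]
    (Y Ypo : Ω → ℝ) (D : Ω → ℕ) (Z : Ω → ℤ) (X : Ω → ℝ) (d : ℕ) (z : ℤ)
    (hD : Measurable D) (hZ : Measurable Z) (hX : Measurable X) (hYpoMeas : Measurable Ypo)
    (hDbin : ∀ ω, D ω = 0 ∨ D ω = 1)
    (hYint : Integrable Y P) (hYpoInt : Integrable Ypo P)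
    (hcons : ∀ ω, D ω = d → Z ω = z → Y ω = Ypo ω)
    (hcondindep : CondIndepFun (MeasurableSpace.comap X inferInstance) hX.comap_le
      Ypo (fun ω => (D ω, Z ω)) P)
    -- the true propensity score p(d,z | X)
    (ps : Ω → ℝ)
    (hps : ps =ᵐ[P] P[({ω' | D ω' = d ∧ Z ω' = z}).indicator (fun _ => (1 : ℝ))
            | MeasurableSpace.comap X inferInstance])
    (hpos : ∀ᵐ ω ∂P, 0 < ps ω)
    -- the true conditional mean outcome μ(d,z,X) = E[Y | D = d, Z = z, X]
    (μfn : Ω → ℝ)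
    (hμ : μfn =ᵐ[P] fun ω =>
      (P[fun ω' => Y ω' * ({ω'' | D ω'' = d ∧ Z ω'' = z}).indicator (fun _ => (1 : ℝ)) ω'
          | MeasurableSpace.comap X inferInstance]) ω / ps ω) :
    ∫ ω, Ypo ω ∂P
      = ∫ ω, μfn ω
          + (({ω' | D ω' = d ∧ Z ω' = z}).indicator (fun _ => (1 : ℝ)) ω / ps ω)
            * (Y ω - μfn ω) ∂P := by
  have hA_eq : (fun ω => (D ω, Z ω)) ⁻¹' {(d, z)} = {ω' | D ω' = d ∧ Z ω' = z} := by
    ext ω; simp [Prod.ext_iff]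
  have hYI_eq : ∀ ω, Y ω * ({ω' | D ω' = d ∧ Z ω' = z}).indicator (fun _ => (1 : ℝ)) ω
      = Ypo ω * ({ω' | D ω' = d ∧ Z ω' = z}).indicator (fun _ => (1 : ℝ)) ω := by
    intro ω
    by_cases h : ω ∈ {ω' | D ω' = d ∧ Z ω' = z}
    · simp only [Set.indicator_of_mem h, mul_one]
      exact hcons ω h.1 h.2
    · simp [Set.indicator_of_notMem h]
  exact aux_main (MeasurableSpace.comap X inferInstance) hX.comap_le P Y Ypo
    (fun ω => (D ω, Z ω)) (d, z) (hD.prodMk hZ) hYpoMeas hYpoInt hcondindep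
    hA_eq hYI_eq ps hps hpos μfn hμ
end

section
/- Let Y be integrable, D ∈ {0,1}, Z discrete, X a random variable, with true conditional mean μ(d,z,X) = E[Y | D=d, Z=z, X] and true propensity p(d,z|X) = P(D=d, Z=z | X) > 0 a.s. Let m̃(X) be any measurable bounded function (a possibly misspecified outcome model). Then E[ m̃(X) + (1{D=d,Z=z}/p(d,z|X)) · (Y − m̃(X)) ] = E[ μ(d,z,X) + (1{D=d,Z=z}/p(d,z|X)) · (Y − μ(d,z,X)) ]; that is, the AIPW functional is invariant to misspecification of the outcome model when the propensity score is correct. -/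
open MeasureTheory ProbabilityTheory Set Filter

private lemma integral_add_of_integral_zero' {Ω : Type*} [MeasurableSpace Ω] {P : Measure Ω}
    {a b : Ω → ℝ} (ha : Integrable a P) (ha0 : ∫ ω, a ω ∂P = 0) :
    ∫ ω, a ω + b ω ∂P = ∫ ω, b ω ∂P := by
  by_cases hb : Integrable b P
  · rw [integral_add ha hb, ha0, zero_add]
  · rw [integral_undef hb, integral_undef]
    intro h
    exact hb (((h.sub ha).congr (Filter.Eventually.of_forall fun ω => by simp)) : _)

private lemma integrable_of_monotone_approx {Ω : Type*} [MeasurableSpace Ω] {P : Measure Ω}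
    {h : Ω → ℝ} {g : ℕ → Ω → ℝ} {B : ℝ}
    (hh : AEStronglyMeasurable h P) (hh0 : ∀ᵐ ω ∂P, 0 ≤ h ω)
    (hg_int : ∀ n, Integrable (g n) P) (hg0 : ∀ n, ∀ᵐ ω ∂P, 0 ≤ g n ω)
    (hmono : ∀ᵐ ω ∂P, Monotone fun n => g n ω)
    (hlim : ∀ᵐ ω ∂P, Tendsto (fun n => g n ω) atTop (nhds (h ω)))
    (hB : ∀ n, ∫ ω, g n ω ∂P ≤ B) : Integrable h P := by
  have hkey : Tendsto (fun n => ∫⁻ ω, ENNReal.ofReal (g n ω) ∂P) atTop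
      (nhds (∫⁻ ω, ENNReal.ofReal (h ω) ∂P)) := by
    refine lintegral_tendsto_of_tendsto_of_monotone
      (fun n => (hg_int n).aemeasurable.ennreal_ofReal) ?_ ?_
    · filter_upwards [hmono] with ω hω i j hij
      exact ENNReal.ofReal_le_ofReal (hω hij)
    · filter_upwards [hlim] with ω hω
      exact (ENNReal.continuous_ofReal.tendsto _).comp hω
  have hle : ∫⁻ ω, ENNReal.ofReal (h ω) ∂P ≤ ENNReal.ofReal B := by
    refine le_of_tendsto' hkey fun n => ?_
    rw [← ofReal_integral_eq_lintegral_ofReal (hg_int n) (hg0 n)]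
    exact ENNReal.ofReal_le_ofReal (hB n)
  refine ⟨hh, ?_⟩
  have heq : ∫⁻ ω, ‖h ω‖ₑ ∂P = ∫⁻ ω, ENNReal.ofReal (h ω) ∂P := by
    refine lintegral_congr_ae ?_
    filter_upwards [hh0] with ω hω
    rw [Real.enorm_eq_ofReal hω]
  rw [HasFiniteIntegral, heq]
  exact lt_of_le_of_lt hle ENNReal.ofReal_lt_top

private lemma aipw_main {Ω : Type*} {m m0 : MeasurableSpace Ω} (hm : m ≤ m0)
    (P : @Measure Ω m0) [IsProbabilityMeasure P]
    (I Y f : Ω → ℝ) (hImeas : Measurable I) (hI01 : ∀ ω, I ω = 0 ∨ I ω = 1)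
    (hYint : Integrable Y P) (hf : StronglyMeasurable[m] f)
    (C : ℝ) (hfC : ∀ ω, |f ω| ≤ C)
    (hppos : ∀ᵐ ω ∂P, 0 < (P[I|m]) ω) :
    ∫ ω, f ω + (I ω / (P[I|m]) ω) * (Y ω - f ω) ∂P
      = ∫ ω, ((P[fun ω' => Y ω' * I ω'|m]) ω / (P[I|m]) ω)
          + (I ω / (P[I|m]) ω) * (Y ω - (P[fun ω' => Y ω' * I ω'|m]) ω / (P[I|m]) ω) ∂P := by
  have hI0 : ∀ ω, 0 ≤ I ω := fun ω => by rcases hI01 ω with h | h <;> simp [h]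
  have hI1 : ∀ ω, I ω ≤ 1 := fun ω => by rcases hI01 ω with h | h <;> simp [h]
  set p : Ω → ℝ := P[I|m] with hp_def
  set ν : Ω → ℝ := P[fun ω' => Y ω' * I ω'|m] with hν_def
  have hp_sm : StronglyMeasurable[m] p := stronglyMeasurable_condExp
  have hp_meas : Measurable p := (hp_sm.mono hm).measurable
  have hν_sm : StronglyMeasurable[m] ν := stronglyMeasurable_condExp
  have hν_meas : Measurable ν := (hν_sm.mono hm).measurable
  set q : Ω → ℝ := fun ω => I ω / p ω with hq_def
  set μ' : Ω → ℝ := fun ω => ν ω / p ω with hμ'_def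
  have hq_meas : Measurable q := hImeas.div hp_meas
  have hμ'_measm : Measurable[m] μ' := hν_sm.measurable.div hp_sm.measurable
  have hμ'_meas : Measurable μ' := hν_meas.div hp_meas
  have hq0 : ∀ᵐ ω ∂P, 0 ≤ q ω := by
    filter_upwards [hppos] with ω hp
    exact div_nonneg (hI0 ω) hp.le
  have hI_int : Integrable I P := by
    refine (integrable_const (1 : ℝ)).mono' hImeas.aestronglyMeasurable
      (Filter.Eventually.of_forall fun ω => ?_)
    rw [Real.norm_eq_abs, abs_of_nonneg (hI0 ω)]; exact hI1 ω
  have hYI_int : Integrable (fun ω => Y ω * I ω) P := by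
    refine hYint.abs.mono' (hYint.aestronglyMeasurable.mul hImeas.aestronglyMeasurable)
      (Filter.Eventually.of_forall fun ω => ?_)
    rw [Real.norm_eq_abs, abs_mul]
    calc |Y ω| * |I ω| ≤ |Y ω| * 1 := by
          refine mul_le_mul_of_nonneg_left ?_ (abs_nonneg _)
          rw [abs_of_nonneg (hI0 ω)]; exact hI1 ω
      _ = |Y ω| := mul_one _
  -- pull-out identity
  have pull : ∀ (ψ g : Ω → ℝ), StronglyMeasurable[m] ψ → Integrable g P →
      Integrable (fun ω => ψ ω * g ω) P →
      ∫ ω, ψ ω * g ω ∂P = ∫ ω, ψ ω * (P[g|m]) ω ∂P := by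
    intro ψ g hψ hg hψg
    have h1 : P[ψ * g|m] =ᵐ[P] ψ * P[g|m] := condExp_mul_of_stronglyMeasurable_left hψ hψg hg
    calc ∫ ω, ψ ω * g ω ∂P = ∫ ω, (P[fun ω' => ψ ω' * g ω'|m]) ω ∂P :=
          (integral_condExp hm).symm
      _ = ∫ ω, ψ ω * (P[g|m]) ω ∂P := integral_congr_ae h1
  -- truncations
  set φ : ℕ → Ω → ℝ := fun n ω => min (p ω)⁻¹ (n : ℝ) with hφ_def
  have hφ_sm : ∀ n, StronglyMeasurable[m] (φ n) := fun n =>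
    (hp_sm.measurable.inv.min measurable_const).stronglyMeasurable
  have hφ_meas : ∀ n, Measurable (φ n) := fun n => ((hφ_sm n).mono hm).measurable
  have hφ_mono : ∀ ω, Monotone fun n : ℕ => φ n ω := fun ω i j hij =>
    min_le_min le_rfl (Nat.cast_le.2 hij)
  have hφ_le : ∀ n ω, φ n ω ≤ (p ω)⁻¹ := fun n ω => min_le_left _ _
  have hφ_len : ∀ n ω, φ n ω ≤ (n : ℝ) := fun n ω => min_le_right _ _
  have hφ0 : ∀ᵐ ω ∂P, ∀ n : ℕ, 0 ≤ φ n ω := by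
    filter_upwards [hppos] with ω hp n
    exact le_min (inv_pos.2 hp).le (Nat.cast_nonneg n)
  have hφp : ∀ᵐ ω ∂P, ∀ n : ℕ, φ n ω * p ω = min 1 ((n : ℝ) * p ω) := by
    filter_upwards [hppos] with ω hp n
    rw [hφ_def]
    rw [min_mul_of_nonneg _ _ hp.le, inv_mul_cancel₀ hp.ne']
  have hφ_tend : ∀ᵐ ω ∂P, Tendsto (fun n : ℕ => φ n ω) atTop (nhds (p ω)⁻¹) := by
    filter_upwards [hppos] with ω hp
    refine tendsto_atTop_of_eventually_const (i₀ := ⌈(p ω)⁻¹⌉₊) fun n hn => ?_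
    exact min_eq_left ((Nat.le_ceil _).trans (Nat.cast_le.2 hn))
  have hmin_tend : ∀ᵐ ω ∂P, Tendsto (fun n : ℕ => min 1 ((n : ℝ) * p ω)) atTop (nhds 1) := by
    filter_upwards [hppos] with ω hp
    refine tendsto_atTop_of_eventually_const (i₀ := ⌈(p ω)⁻¹⌉₊) fun n hn => ?_
    refine min_eq_left ?_
    have h1 : (p ω)⁻¹ ≤ (n : ℝ) := (Nat.le_ceil _).trans (Nat.cast_le.2 hn)
    calc (1 : ℝ) = (p ω)⁻¹ * p ω := (inv_mul_cancel₀ hp.ne').symm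
      _ ≤ (n : ℝ) * p ω := mul_le_mul_of_nonneg_right h1 hp.le
  have hmin_bd : ∀ᵐ ω ∂P, ∀ n : ℕ, |min 1 ((n : ℝ) * p ω)| ≤ 1 := by
    filter_upwards [hppos] with ω hp n
    rw [abs_of_nonneg (le_min zero_le_one (mul_nonneg (Nat.cast_nonneg n) hp.le))]
    exact min_le_left _ _
  have hφI_le_q : ∀ᵐ ω ∂P, ∀ n : ℕ, φ n ω * I ω ≤ q ω := by
    filter_upwards [hppos] with ω hp n
    calc φ n ω * I ω ≤ (p ω)⁻¹ * I ω :=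
          mul_le_mul_of_nonneg_right (hφ_le n ω) (hI0 ω)
      _ = q ω := (div_eq_inv_mul _ _).symm
  have hφI_tend : ∀ᵐ ω ∂P, Tendsto (fun n : ℕ => φ n ω * I ω) atTop (nhds (q ω)) := by
    filter_upwards [hφ_tend] with ω hω
    have := hω.mul_const (I ω)
    simpa [hq_def, div_eq_inv_mul] using this
  -- integrability of q = I / p
  have hfn_int : ∀ n : ℕ, Integrable (fun ω => φ n ω * I ω) P := by
    intro n
    refine (integrable_const (n : ℝ)).mono'
      ((hφ_meas n).mul hImeas).aestronglyMeasurable ?_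
    filter_upwards [hφ0] with ω h0
    rw [Real.norm_eq_abs, abs_of_nonneg (mul_nonneg (h0 n) (hI0 ω))]
    calc φ n ω * I ω ≤ φ n ω * 1 := mul_le_mul_of_nonneg_left (hI1 ω) (h0 n)
      _ ≤ (n : ℝ) := by rw [mul_one]; exact hφ_len n ω
  have hmin_int : ∀ n : ℕ, Integrable (fun ω => min 1 ((n : ℝ) * p ω)) P := by
    intro n
    refine (integrable_const (1 : ℝ)).mono'
      (measurable_const.min (measurable_const.mul hp_meas)).aestronglyMeasurable ?_
    filter_upwards [hmin_bd] with ω hb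
    rw [Real.norm_eq_abs]; exact hb n
  have hfn_eq : ∀ n : ℕ, ∫ ω, φ n ω * I ω ∂P = ∫ ω, min 1 ((n : ℝ) * p ω) ∂P := by
    intro n
    rw [pull (φ n) I (hφ_sm n) hI_int (hfn_int n)]
    refine integral_congr_ae ?_
    filter_upwards [hφp] with ω h
    exact h n
  have hfn_le : ∀ n : ℕ, ∫ ω, φ n ω * I ω ∂P ≤ 1 := by
    intro n
    rw [hfn_eq n]
    calc ∫ ω, min 1 ((n : ℝ) * p ω) ∂P ≤ ∫ _ω, (1 : ℝ) ∂P := by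
          refine integral_mono_ae (hmin_int n) (integrable_const 1) ?_
          exact Filter.Eventually.of_forall fun ω => min_le_left _ _
      _ = 1 := by simp
  have hq_int : Integrable q P := by
    refine integrable_of_monotone_approx (g := fun n ω => φ n ω * I ω) (B := 1)
      hq_meas.aestronglyMeasurable hq0 hfn_int ?_ ?_ hφI_tend hfn_le
    · intro n
      filter_upwards [hφ0] with ω h0
      exact mul_nonneg (h0 n) (hI0 ω)
    · refine Filter.Eventually.of_forall fun ω i j hij => ?_
      exact mul_le_mul_of_nonneg_right (hφ_mono ω hij) (hI0 ω)
  -- T1 : for bounded m-measurable ψ, ∫ ψ q = ∫ ψ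
  have T1 : ∀ (ψ : Ω → ℝ) (c : ℝ), StronglyMeasurable[m] ψ → (∀ ω, |ψ ω| ≤ c) →
      ∫ ω, ψ ω * q ω ∂P = ∫ ω, ψ ω ∂P := by
    intro ψ c hψ hc
    have hψ_meas : Measurable ψ := (hψ.mono hm).measurable
    have heq : ∀ n : ℕ, ∫ ω, ψ ω * (φ n ω * I ω) ∂P
        = ∫ ω, ψ ω * min 1 ((n : ℝ) * p ω) ∂P := by
      intro n
      have hint : Integrable (fun ω => (ψ ω * φ n ω) * I ω) P := by
        refine (integrable_const (c * n : ℝ)).mono'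
          (((hψ_meas.mul (hφ_meas n)).mul hImeas).aestronglyMeasurable) ?_
        filter_upwards [hφ0] with ω h0
        rw [Real.norm_eq_abs, abs_mul, abs_mul]
        have h1 : |ψ ω| * |φ n ω| ≤ c * (n : ℝ) := by
          refine mul_le_mul (hc ω) ?_ (abs_nonneg _) ((abs_nonneg _).trans (hc ω))
          rw [abs_of_nonneg (h0 n)]; exact hφ_len n ω
        calc |ψ ω| * |φ n ω| * |I ω| ≤ |ψ ω| * |φ n ω| * 1 := by
              refine mul_le_mul_of_nonneg_left ?_ (mul_nonneg (abs_nonneg _) (abs_nonneg _))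
              rw [abs_of_nonneg (hI0 ω)]; exact hI1 ω
          _ = |ψ ω| * |φ n ω| := mul_one _
          _ ≤ c * (n : ℝ) := h1
      have h2 : ∫ ω, ψ ω * (φ n ω * I ω) ∂P = ∫ ω, (ψ ω * φ n ω) * I ω ∂P := by
        refine integral_congr_ae (Filter.Eventually.of_forall fun ω => ?_)
        ring
      rw [h2, pull (fun ω => ψ ω * φ n ω) I (hψ.mul (hφ_sm n)) hI_int hint]
      refine integral_congr_ae ?_
      filter_upwards [hφp] with ω h
      calc ψ ω * φ n ω * p ω = ψ ω * (φ n ω * p ω) := by ring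
        _ = ψ ω * min 1 ((n : ℝ) * p ω) := by rw [h n]
    have hDCT1 : Tendsto (fun n : ℕ => ∫ ω, ψ ω * (φ n ω * I ω) ∂P) atTop
        (nhds (∫ ω, ψ ω * q ω ∂P)) := by
      refine tendsto_integral_of_dominated_convergence (fun ω => c * q ω)
        (fun n => (hψ_meas.mul ((hφ_meas n).mul hImeas)).aestronglyMeasurable)
        (hq_int.const_mul c) ?_ ?_
      · intro n
        filter_upwards [hφ0, hq0, hφI_le_q] with ω h0 hq0ω hle
        rw [Real.norm_eq_abs, abs_mul, abs_of_nonneg (mul_nonneg (h0 n) (hI0 ω))]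
        refine mul_le_mul (hc ω) (hle n) (mul_nonneg (h0 n) (hI0 ω))
          ((abs_nonneg _).trans (hc ω))
      · filter_upwards [hφI_tend] with ω hω
        exact hω.const_mul (ψ ω)
    have hDCT2 : Tendsto (fun n : ℕ => ∫ ω, ψ ω * min 1 ((n : ℝ) * p ω) ∂P) atTop
        (nhds (∫ ω, ψ ω ∂P)) := by
      refine tendsto_integral_of_dominated_convergence (fun _ω => c)
        (fun n => (hψ_meas.mul (measurable_const.min
          (measurable_const.mul hp_meas))).aestronglyMeasurable)
        (integrable_const c) ?_ ?_
      · intro n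
        filter_upwards [hmin_bd] with ω hb
        rw [Real.norm_eq_abs, abs_mul]
        calc |ψ ω| * |min 1 ((n : ℝ) * p ω)| ≤ |ψ ω| * 1 :=
              mul_le_mul_of_nonneg_left (hb n) (abs_nonneg _)
          _ = |ψ ω| := mul_one _
          _ ≤ c := hc ω
      · filter_upwards [hmin_tend] with ω hω
        simpa using hω.const_mul (ψ ω)
    exact tendsto_nhds_unique (hDCT1.congr fun n => heq n) hDCT2
  -- the common term w
  set w : Ω → ℝ := fun ω => q ω * Y ω with hw_def
  -- LHS reduction
  have hf_meas : Measurable f := (hf.mono hm).measurable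
  have hf_int : Integrable f P := by
    refine (integrable_const C).mono' hf_meas.aestronglyMeasurable
      (Filter.Eventually.of_forall fun ω => ?_)
    rw [Real.norm_eq_abs]; exact hfC ω
  have hfq_int : Integrable (fun ω => f ω * q ω) P :=
    hq_int.bdd_mul hf_meas.aestronglyMeasurable
      (c := C) (Filter.Eventually.of_forall fun ω => by rw [Real.norm_eq_abs]; exact hfC ω)
  have hu_int : Integrable (fun ω => f ω - f ω * q ω) P := hf_int.sub hfq_int
  have hu0 : ∫ ω, f ω - f ω * q ω ∂P = 0 := by
    rw [integral_sub hf_int hfq_int, T1 f C hf hfC, sub_self]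
  have hLHS : ∫ ω, f ω + (I ω / p ω) * (Y ω - f ω) ∂P = ∫ ω, w ω ∂P := by
    have h1 : ∫ ω, f ω + (I ω / p ω) * (Y ω - f ω) ∂P
        = ∫ ω, (f ω - f ω * q ω) + w ω ∂P := by
      refine integral_congr_ae (Filter.Eventually.of_forall fun ω => ?_)
      show f ω + I ω / p ω * (Y ω - f ω) = f ω - f ω * (I ω / p ω) + I ω / p ω * Y ω
      ring
    rw [h1]
    exact integral_add_of_integral_zero' hu_int hu0
  -- RHS reduction
  have hRHS : ∫ ω, μ' ω + (I ω / p ω) * (Y ω - μ' ω) ∂P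
      = ∫ ω, (μ' ω - μ' ω * q ω) + w ω ∂P := by
    refine integral_congr_ae (Filter.Eventually.of_forall fun ω => ?_)
    show μ' ω + I ω / p ω * (Y ω - μ' ω) = μ' ω - μ' ω * (I ω / p ω) + I ω / p ω * Y ω
    ring
  -- generic truncation identity
  have heqGen : ∀ (ψ : Ω → ℝ), StronglyMeasurable[m] ψ →
      (∀ n : ℕ, Integrable (fun ω => ψ ω * φ n ω * I ω) P) →
      ∀ n : ℕ, ∫ ω, ψ ω * (φ n ω * I ω) ∂P = ∫ ω, ψ ω * min 1 ((n : ℝ) * p ω) ∂P := by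
    intro ψ hψ hint n
    have h2 : ∫ ω, ψ ω * (φ n ω * I ω) ∂P = ∫ ω, ψ ω * φ n ω * I ω ∂P :=
      integral_congr_ae (Filter.Eventually.of_forall fun ω => by ring)
    rw [h2, pull (fun ω => ψ ω * φ n ω) I (hψ.mul (hφ_sm n)) hI_int (hint n)]
    refine integral_congr_ae ?_
    filter_upwards [hφp] with ω h
    calc ψ ω * φ n ω * (P[I|m]) ω = ψ ω * (φ n ω * p ω) := by ring
      _ = ψ ω * min 1 ((n : ℝ) * p ω) := by rw [h n]
  by_cases hμint : Integrable μ' P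
  · -- Case A : μ' integrable
    have hμ'_mm : StronglyMeasurable[m] μ' := hμ'_measm.stronglyMeasurable
    have hμabs_mm : StronglyMeasurable[m] fun ω => |μ' ω| :=
      (continuous_abs.measurable.comp hμ'_measm).stronglyMeasurable
    have hμabs_meas : Measurable fun ω => |μ' ω| := continuous_abs.measurable.comp hμ'_meas
    have hgn_int : ∀ n : ℕ, Integrable (fun ω => μ' ω * φ n ω * I ω) P := by
      intro n
      refine (hμint.abs.const_mul (n : ℝ)).mono'
        ((hμ'_meas.mul (hφ_meas n)).mul hImeas).aestronglyMeasurable ?_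
      filter_upwards [hφ0] with ω h0
      rw [Real.norm_eq_abs, abs_mul, abs_mul]
      have h1 : |φ n ω| ≤ (n : ℝ) := by rw [abs_of_nonneg (h0 n)]; exact hφ_len n ω
      have h2 : |I ω| ≤ 1 := by rw [abs_of_nonneg (hI0 ω)]; exact hI1 ω
      calc |μ' ω| * |φ n ω| * |I ω| ≤ |μ' ω| * (n : ℝ) * 1 :=
            mul_le_mul (mul_le_mul_of_nonneg_left h1 (abs_nonneg _)) h2 (abs_nonneg _)
              (mul_nonneg (abs_nonneg _) (Nat.cast_nonneg n))
        _ = (n : ℝ) * |μ' ω| := by ring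
    have hgnabs_int : ∀ n : ℕ, Integrable (fun ω => |μ' ω| * φ n ω * I ω) P := by
      intro n
      refine (hgn_int n).abs.congr ?_
      filter_upwards [hφ0] with ω h0
      rw [abs_mul, abs_mul, abs_of_nonneg (h0 n), abs_of_nonneg (hI0 ω)]
    have hminabs_int : ∀ n : ℕ, Integrable (fun ω => |μ' ω| * min 1 ((n : ℝ) * p ω)) P := by
      intro n
      refine hμint.abs.mono' (hμabs_meas.mul (measurable_const.min
        (measurable_const.mul hp_meas))).aestronglyMeasurable ?_
      filter_upwards [hmin_bd] with ω hb
      rw [Real.norm_eq_abs, abs_mul, abs_abs]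
      calc |μ' ω| * |min 1 ((n : ℝ) * p ω)| ≤ |μ' ω| * 1 :=
            mul_le_mul_of_nonneg_left (hb n) (abs_nonneg _)
        _ = |μ' ω| := mul_one _
    have habs_int : Integrable (fun ω => |μ' ω| * q ω) P := by
      refine integrable_of_monotone_approx (g := fun n ω => |μ' ω| * (φ n ω * I ω))
        (B := ∫ ω, |μ' ω| ∂P)
        (hμabs_meas.mul hq_meas).aestronglyMeasurable ?_ ?_ ?_ ?_ ?_ ?_
      · filter_upwards [hq0] with ω h; exact mul_nonneg (abs_nonneg _) h
      · intro n
        refine (hgnabs_int n).congr (Filter.Eventually.of_forall fun ω => by ring)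
      · intro n
        filter_upwards [hφ0] with ω h0
        exact mul_nonneg (abs_nonneg _) (mul_nonneg (h0 n) (hI0 ω))
      · refine Filter.Eventually.of_forall fun ω i j hij => ?_
        exact mul_le_mul_of_nonneg_left
          (mul_le_mul_of_nonneg_right (hφ_mono ω hij) (hI0 ω)) (abs_nonneg _)
      · filter_upwards [hφI_tend] with ω hω
        exact hω.const_mul |μ' ω|
      · intro n
        have h1 : ∫ ω, |μ' ω| * (φ n ω * I ω) ∂P = ∫ ω, |μ' ω| * min 1 ((n : ℝ) * p ω) ∂P :=
          heqGen (fun ω => |μ' ω|) hμabs_mm hgnabs_int n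
        rw [h1]
        refine integral_mono_ae (hminabs_int n) hμint.abs ?_
        filter_upwards [hmin_bd] with ω hb
        calc |μ' ω| * min 1 ((n : ℝ) * p ω) ≤ |μ' ω| * |min 1 ((n : ℝ) * p ω)| :=
              mul_le_mul_of_nonneg_left (le_abs_self _) (abs_nonneg _)
          _ ≤ |μ' ω| * 1 := mul_le_mul_of_nonneg_left (hb n) (abs_nonneg _)
          _ = |μ' ω| := mul_one _
    have hμq_int : Integrable (fun ω => μ' ω * q ω) P := by
      refine habs_int.mono' (hμ'_meas.mul hq_meas).aestronglyMeasurable ?_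
      filter_upwards [hq0] with ω h
      rw [Real.norm_eq_abs, abs_mul, abs_of_nonneg h]
    have hDCTA1 : Tendsto (fun n : ℕ => ∫ ω, μ' ω * (φ n ω * I ω) ∂P) atTop
        (nhds (∫ ω, μ' ω * q ω ∂P)) := by
      refine tendsto_integral_of_dominated_convergence (fun ω => |μ' ω| * q ω)
        (fun n => (hμ'_meas.mul ((hφ_meas n).mul hImeas)).aestronglyMeasurable)
        habs_int ?_ ?_
      · intro n
        filter_upwards [hφ0, hφI_le_q] with ω h0 hle
        rw [Real.norm_eq_abs, abs_mul, abs_of_nonneg (mul_nonneg (h0 n) (hI0 ω))]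
        exact mul_le_mul_of_nonneg_left (hle n) (abs_nonneg _)
      · filter_upwards [hφI_tend] with ω hω
        exact hω.const_mul (μ' ω)
    have hDCTA2 : Tendsto (fun n : ℕ => ∫ ω, μ' ω * min 1 ((n : ℝ) * p ω) ∂P) atTop
        (nhds (∫ ω, μ' ω ∂P)) := by
      refine tendsto_integral_of_dominated_convergence (fun ω => |μ' ω|)
        (fun n => (hμ'_meas.mul (measurable_const.min
          (measurable_const.mul hp_meas))).aestronglyMeasurable)
        hμint.abs ?_ ?_
      · intro n
        filter_upwards [hmin_bd] with ω hb
        rw [Real.norm_eq_abs, abs_mul]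
        calc |μ' ω| * |min 1 ((n : ℝ) * p ω)| ≤ |μ' ω| * 1 :=
              mul_le_mul_of_nonneg_left (hb n) (abs_nonneg _)
          _ = |μ' ω| := mul_one _
      · filter_upwards [hmin_tend] with ω hω
        simpa using hω.const_mul (μ' ω)
    have hμq_eq : ∫ ω, μ' ω * q ω ∂P = ∫ ω, μ' ω ∂P :=
      tendsto_nhds_unique (hDCTA1.congr fun n => heqGen μ' hμ'_mm hgn_int n) hDCTA2
    have hv_int : Integrable (fun ω => μ' ω - μ' ω * q ω) P := hμint.sub hμq_int
    have hv0 : ∫ ω, μ' ω - μ' ω * q ω ∂P = 0 := by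
      rw [integral_sub hμint hμq_int, hμq_eq, sub_self]
    exact hLHS.trans ((integral_add_of_integral_zero' hv_int hv0).symm.trans hRHS.symm)
  · -- Case B : μ' not integrable
    have hμ'_mm : StronglyMeasurable[m] μ' := hμ'_measm.stronglyMeasurable
    have hw_nonint : ¬ Integrable w P := by
      intro hw
      apply hμint
      set G : Ω → ℝ := fun ω => |Y ω * I ω| with hG_def
      have hG_int : Integrable G P := hYI_int.abs
      have hG0 : ∀ ω, 0 ≤ G ω := fun ω => abs_nonneg _
      set κ : Ω → ℝ := P[G|m] with hκ_def
      have hκ_int : Integrable κ P := integrable_condExp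
      have hκ_meas : Measurable κ := (stronglyMeasurable_condExp.mono hm).measurable
      have hκ0 : ∀ᵐ ω ∂P, 0 ≤ κ ω :=
        condExp_nonneg (Filter.Eventually.of_forall hG0)
      have hφG_int : ∀ n : ℕ, Integrable (fun ω => φ n ω * G ω) P := by
        intro n
        refine (hG_int.const_mul (n : ℝ)).mono'
          ((hφ_meas n).aestronglyMeasurable.mul hG_int.aestronglyMeasurable) ?_
        filter_upwards [hφ0] with ω h0
        rw [Real.norm_eq_abs, abs_mul, abs_of_nonneg (h0 n), abs_of_nonneg (hG0 ω)]
        exact mul_le_mul_of_nonneg_right (hφ_len n ω) (hG0 ω)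
      have hκφ_int : ∀ n : ℕ, Integrable (fun ω => κ ω * φ n ω) P := by
        intro n
        refine (hκ_int.abs.const_mul (n : ℝ)).mono'
          (hκ_meas.mul (hφ_meas n)).aestronglyMeasurable ?_
        filter_upwards [hφ0] with ω h0
        rw [Real.norm_eq_abs, abs_mul]
        calc |κ ω| * |φ n ω| ≤ |κ ω| * (n : ℝ) := by
              refine mul_le_mul_of_nonneg_left ?_ (abs_nonneg _)
              rw [abs_of_nonneg (h0 n)]; exact hφ_len n ω
          _ = (n : ℝ) * |κ ω| := mul_comm _ _
      have hκφ_le : ∀ n : ℕ, ∫ ω, κ ω * φ n ω ∂P ≤ ∫ ω, |w ω| ∂P := by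
        intro n
        have h1 : ∫ ω, κ ω * φ n ω ∂P = ∫ ω, φ n ω * G ω ∂P := by
          calc ∫ ω, κ ω * φ n ω ∂P = ∫ ω, φ n ω * (P[G|m]) ω ∂P :=
                integral_congr_ae (Filter.Eventually.of_forall fun ω => mul_comm _ _)
            _ = ∫ ω, φ n ω * G ω ∂P := (pull (φ n) G (hφ_sm n) hG_int (hφG_int n)).symm
        rw [h1]
        refine integral_mono_ae (hφG_int n) hw.abs ?_
        filter_upwards [hφ0, hppos] with ω h0 hp
        calc φ n ω * G ω ≤ (p ω)⁻¹ * G ω :=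
              mul_le_mul_of_nonneg_right (hφ_le n ω) (hG0 ω)
          _ = |w ω| := by
              show (p ω)⁻¹ * |Y ω * I ω| = |I ω / p ω * Y ω|
              have e1 : |Y ω * I ω| = |Y ω| * I ω := by
                rw [abs_mul, abs_of_nonneg (hI0 ω)]
              have e2 : |I ω / p ω * Y ω| = I ω / p ω * |Y ω| := by
                rw [abs_mul, abs_div, abs_of_nonneg (hI0 ω), abs_of_pos hp]
              rw [e1, e2, div_eq_mul_inv]
              ring
      have hκp_int : Integrable (fun ω => κ ω * (p ω)⁻¹) P := by
        refine integrable_of_monotone_approx (g := fun n ω => κ ω * φ n ω)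
          (B := ∫ ω, |w ω| ∂P)
          (hκ_meas.mul hp_meas.inv).aestronglyMeasurable ?_ hκφ_int ?_ ?_ ?_ hκφ_le
        · filter_upwards [hκ0, hppos] with ω h1 h2
          exact mul_nonneg h1 (inv_pos.2 h2).le
        · intro n
          filter_upwards [hκ0, hφ0] with ω h1 h2
          exact mul_nonneg h1 (h2 n)
        · filter_upwards [hκ0] with ω h1 i j hij
          exact mul_le_mul_of_nonneg_left (hφ_mono ω hij) h1
        · filter_upwards [hφ_tend] with ω hω
          exact hω.const_mul (κ ω)
      have hν_le : ∀ᵐ ω ∂P, |ν ω| ≤ κ ω := by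
        have h1 : ν ≤ᵐ[P] κ :=
          condExp_mono hYI_int hG_int (Filter.Eventually.of_forall fun ω => le_abs_self _)
        have h2 : P[fun ω => -(Y ω * I ω)|m] ≤ᵐ[P] κ :=
          condExp_mono hYI_int.neg hG_int (Filter.Eventually.of_forall fun ω => neg_le_abs _)
        have h3 : P[fun ω => -(Y ω * I ω)|m] =ᵐ[P] fun ω => -(ν ω) :=
          condExp_neg (fun ω => Y ω * I ω) m
        filter_upwards [h1, h2, h3] with ω e1 e2 e3
        rw [e3] at e2
        exact abs_le.2 ⟨neg_le.1 e2, e1⟩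
      refine hκp_int.mono' hμ'_meas.aestronglyMeasurable ?_
      filter_upwards [hν_le, hppos] with ω h1 hp
      rw [Real.norm_eq_abs]
      show |ν ω / p ω| ≤ κ ω * (p ω)⁻¹
      rw [abs_div, abs_of_pos hp, div_eq_mul_inv]
      exact mul_le_mul_of_nonneg_right h1 (inv_pos.2 hp).le
    have hR_nonint : ¬ Integrable (fun ω => (μ' ω - μ' ω * q ω) + w ω) P := by
      intro hR
      apply hμint
      have habs_meas : Measurable fun ω => |μ' ω| := continuous_abs.measurable.comp hμ'_meas
      set σ : ℕ → Ω → ℝ := fun n ω =>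
        if |μ' ω| ≤ (n : ℝ) then (if 0 ≤ μ' ω then (1 : ℝ) else -1) else 0 with hσ_def
      have hσ_mm : ∀ n, Measurable[m] (σ n) := by
        intro n
        refine Measurable.ite ?_ (Measurable.ite ?_ measurable_const measurable_const)
          measurable_const
        · exact measurableSet_le (continuous_abs.measurable.comp hμ'_measm) measurable_const
        · exact measurableSet_le measurable_const hμ'_measm
      have hσ_meas : ∀ n, Measurable (σ n) := fun n => (hσ_mm n).mono hm le_rfl
      have hσ_bd : ∀ n ω, |σ n ω| ≤ 1 := by
        intro n ω
        rw [hσ_def]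
        dsimp only
        split_ifs <;> norm_num
      have hμσ : ∀ n ω, μ' ω * σ n ω = if |μ' ω| ≤ (n : ℝ) then |μ' ω| else 0 := by
        intro n ω
        rw [hσ_def]
        dsimp only
        by_cases h1 : |μ' ω| ≤ (n : ℝ)
        · rw [if_pos h1, if_pos h1]
          by_cases h2 : 0 ≤ μ' ω
          · rw [if_pos h2, mul_one, abs_of_nonneg h2]
          · rw [if_neg h2, abs_of_neg (lt_of_not_ge h2)]; ring
        · rw [if_neg h1, if_neg h1, mul_zero]
      have hμσ_bd : ∀ n ω, |μ' ω * σ n ω| ≤ (n : ℝ) := by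
        intro n ω
        rw [hμσ]
        by_cases h1 : |μ' ω| ≤ (n : ℝ)
        · rw [if_pos h1, abs_abs]; exact h1
        · rw [if_neg h1, abs_zero]; exact Nat.cast_nonneg n
      have hμσ_mm : ∀ n, StronglyMeasurable[m] fun ω => μ' ω * σ n ω := fun n =>
        (hμ'_measm.mul (hσ_mm n)).stronglyMeasurable
      have hμσ_meas : ∀ n, Measurable fun ω => μ' ω * σ n ω := fun n =>
        hμ'_meas.mul (hσ_meas n)
      have hμσ_int : ∀ n, Integrable (fun ω => μ' ω * σ n ω) P := fun n =>
        (integrable_const (n : ℝ)).mono' (hμσ_meas n).aestronglyMeasurable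
          (Filter.Eventually.of_forall fun ω => by
            rw [Real.norm_eq_abs]; exact hμσ_bd n ω)
      have hμσq_int : ∀ n, Integrable (fun ω => (μ' ω * σ n ω) * q ω) P := fun n =>
        hq_int.bdd_mul (hμσ_meas n).aestronglyMeasurable
          (c := (n : ℝ)) (Filter.Eventually.of_forall fun ω => by rw [Real.norm_eq_abs]; exact hμσ_bd n ω)
      have hvσ_int : ∀ n, Integrable (fun ω => (μ' ω * σ n ω) - (μ' ω * σ n ω) * q ω) P :=
        fun n => (hμσ_int n).sub (hμσq_int n)
      have hvσ0 : ∀ n, ∫ ω, (μ' ω * σ n ω) - (μ' ω * σ n ω) * q ω ∂P = 0 := by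
        intro n
        rw [integral_sub (hμσ_int n) (hμσq_int n),
          T1 (fun ω => μ' ω * σ n ω) (n : ℝ) (hμσ_mm n) (hμσ_bd n), sub_self]
      have hRσ_int : ∀ n, Integrable (fun ω => ((μ' ω - μ' ω * q ω) + w ω) * σ n ω) P := by
        intro n
        have h1 := hR.bdd_mul (hσ_meas n).aestronglyMeasurable
          (c := 1) (Filter.Eventually.of_forall fun ω => by rw [Real.norm_eq_abs]; exact hσ_bd n ω)
        exact h1.congr (Filter.Eventually.of_forall fun ω => mul_comm _ _)
      have hwσ_int : ∀ n, Integrable (fun ω => w ω * σ n ω) P := by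
        intro n
        refine ((hRσ_int n).sub (hvσ_int n)).congr (Filter.Eventually.of_forall fun ω => ?_)
        show ((μ' ω - μ' ω * q ω) + w ω) * σ n ω
            - ((μ' ω * σ n ω) - (μ' ω * σ n ω) * q ω) = w ω * σ n ω
        ring
      have hwσ_eq : ∀ n, ∫ ω, w ω * σ n ω ∂P = ∫ ω, μ' ω * σ n ω ∂P := by
        intro n
        have hFk_eq : ∀ k : ℕ, ∫ ω, (σ n ω * φ k ω) * (Y ω * I ω) ∂P
            = ∫ ω, (μ' ω * σ n ω) * min 1 ((k : ℝ) * p ω) ∂P := by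
          intro k
          have hint : Integrable (fun ω => (σ n ω * φ k ω) * (Y ω * I ω)) P := by
            refine (hYI_int.abs.const_mul (k : ℝ)).mono'
              ((((hσ_meas n).mul (hφ_meas k)).aestronglyMeasurable).mul
                hYI_int.aestronglyMeasurable) ?_
            filter_upwards [hφ0] with ω h0
            rw [Real.norm_eq_abs, abs_mul, abs_mul]
            have e1 : |σ n ω| * |φ k ω| ≤ 1 * (k : ℝ) := by
              refine mul_le_mul (hσ_bd n ω) ?_ (abs_nonneg _) zero_le_one
              rw [abs_of_nonneg (h0 k)]; exact hφ_len k ω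
            calc |σ n ω| * |φ k ω| * |Y ω * I ω| ≤ 1 * (k : ℝ) * |Y ω * I ω| :=
                  mul_le_mul_of_nonneg_right e1 (abs_nonneg _)
              _ = (k : ℝ) * |Y ω * I ω| := by ring
          rw [pull (fun ω => σ n ω * φ k ω) (fun ω => Y ω * I ω)
            (((hσ_mm n).stronglyMeasurable).mul (hφ_sm k)) hYI_int hint]
          refine integral_congr_ae ?_
          filter_upwards [hφp, hppos] with ω h hp
          have hνω : ν ω = μ' ω * p ω := by
            show ν ω = ν ω / p ω * p ω
            rw [div_mul_cancel₀ _ hp.ne']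
          calc σ n ω * φ k ω * (P[fun ω' => Y ω' * I ω'|m]) ω
              = μ' ω * σ n ω * (φ k ω * p ω) := by rw [show (P[fun ω' => Y ω' * I ω'|m]) ω = ν ω from rfl, hνω]; ring
            _ = μ' ω * σ n ω * min 1 ((k : ℝ) * p ω) := by rw [h k]
        have hDCTB1 : Tendsto (fun k : ℕ => ∫ ω, (σ n ω * φ k ω) * (Y ω * I ω) ∂P) atTop
            (nhds (∫ ω, w ω * σ n ω ∂P)) := by
          refine tendsto_integral_of_dominated_convergence (fun ω => |w ω * σ n ω|)
            (fun k => (((hσ_meas n).mul (hφ_meas k)).aestronglyMeasurable).mul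
              hYI_int.aestronglyMeasurable)
            (hwσ_int n).abs ?_ ?_
          · intro k
            filter_upwards [hφ0, hppos] with ω h0 hp
            have e1 : |w ω| = (p ω)⁻¹ * |Y ω * I ω| := by
              show |I ω / p ω * Y ω| = _
              have ea : |Y ω * I ω| = |Y ω| * I ω := by
                rw [abs_mul, abs_of_nonneg (hI0 ω)]
              have eb : |I ω / p ω * Y ω| = I ω / p ω * |Y ω| := by
                rw [abs_mul, abs_div, abs_of_nonneg (hI0 ω), abs_of_pos hp]
              rw [ea, eb, div_eq_mul_inv]
              ring
            rw [Real.norm_eq_abs, abs_mul, abs_mul, abs_mul (w ω), e1]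
            have e2 : |φ k ω| ≤ (p ω)⁻¹ := by
              rw [abs_of_nonneg (h0 k)]; exact hφ_le k ω
            calc |σ n ω| * |φ k ω| * |Y ω * I ω|
                ≤ |σ n ω| * (p ω)⁻¹ * |Y ω * I ω| :=
                  mul_le_mul_of_nonneg_right
                    (mul_le_mul_of_nonneg_left e2 (abs_nonneg _)) (abs_nonneg _)
              _ = (p ω)⁻¹ * |Y ω * I ω| * |σ n ω| := by ring
          · filter_upwards [hφ_tend] with ω hω
            have h2 := (hω.const_mul (σ n ω)).mul_const (Y ω * I ω)
            have e2 : w ω * σ n ω = σ n ω * (p ω)⁻¹ * (Y ω * I ω) := by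
              show I ω / p ω * Y ω * σ n ω = _
              rw [div_eq_mul_inv]; ring
            rw [e2]
            exact h2
        have hDCTB2 : Tendsto (fun k : ℕ => ∫ ω, (μ' ω * σ n ω) * min 1 ((k : ℝ) * p ω) ∂P)
            atTop (nhds (∫ ω, μ' ω * σ n ω ∂P)) := by
          refine tendsto_integral_of_dominated_convergence (fun _ω => (n : ℝ))
            (fun k => ((hμσ_meas n).mul (measurable_const.min
              (measurable_const.mul hp_meas))).aestronglyMeasurable)
            (integrable_const _) ?_ ?_
          · intro k
            filter_upwards [hmin_bd] with ω hb
            rw [Real.norm_eq_abs, abs_mul]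
            calc |μ' ω * σ n ω| * |min 1 ((k : ℝ) * p ω)| ≤ |μ' ω * σ n ω| * 1 :=
                  mul_le_mul_of_nonneg_left (hb k) (abs_nonneg _)
              _ = |μ' ω * σ n ω| := mul_one _
              _ ≤ (n : ℝ) := hμσ_bd n ω
          · filter_upwards [hmin_tend] with ω hω
            simpa using hω.const_mul (μ' ω * σ n ω)
        exact tendsto_nhds_unique (hDCTB1.congr fun k => hFk_eq k) hDCTB2
      have hμσ_le : ∀ n, ∫ ω, μ' ω * σ n ω ∂P
          ≤ ∫ ω, |(μ' ω - μ' ω * q ω) + w ω| ∂P := by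
        intro n
        have h1 : ∫ ω, ((μ' ω - μ' ω * q ω) + w ω) * σ n ω ∂P = ∫ ω, μ' ω * σ n ω ∂P := by
          calc ∫ ω, ((μ' ω - μ' ω * q ω) + w ω) * σ n ω ∂P
              = ∫ ω, (((μ' ω * σ n ω) - (μ' ω * σ n ω) * q ω) + w ω * σ n ω) ∂P :=
                integral_congr_ae (Filter.Eventually.of_forall fun ω => by ring)
            _ = ∫ ω, w ω * σ n ω ∂P := integral_add_of_integral_zero' (hvσ_int n) (hvσ0 n)
            _ = ∫ ω, μ' ω * σ n ω ∂P := hwσ_eq n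
        rw [← h1]
        calc ∫ ω, ((μ' ω - μ' ω * q ω) + w ω) * σ n ω ∂P
            ≤ |∫ ω, ((μ' ω - μ' ω * q ω) + w ω) * σ n ω ∂P| := le_abs_self _
          _ ≤ ∫ ω, |((μ' ω - μ' ω * q ω) + w ω) * σ n ω| ∂P := by
              have hni := norm_integral_le_integral_norm (μ := P)
                (f := fun ω => ((μ' ω - μ' ω * q ω) + w ω) * σ n ω)
              simp only [Real.norm_eq_abs] at hni
              exact hni
          _ ≤ ∫ ω, |(μ' ω - μ' ω * q ω) + w ω| ∂P := by
              refine integral_mono_ae (hRσ_int n).abs hR.abs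
                (Filter.Eventually.of_forall fun ω => ?_)
              show |((μ' ω - μ' ω * q ω) + w ω) * σ n ω| ≤ |(μ' ω - μ' ω * q ω) + w ω|
              rw [abs_mul]
              calc |(μ' ω - μ' ω * q ω) + w ω| * |σ n ω|
                  ≤ |(μ' ω - μ' ω * q ω) + w ω| * 1 :=
                    mul_le_mul_of_nonneg_left (hσ_bd n ω) (abs_nonneg _)
                _ = |(μ' ω - μ' ω * q ω) + w ω| := mul_one _
      have habsμ_int : Integrable (fun ω => |μ' ω|) P := by
        refine integrable_of_monotone_approx (g := fun n ω => μ' ω * σ n ω)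
          (B := ∫ ω, |(μ' ω - μ' ω * q ω) + w ω| ∂P)
          habs_meas.aestronglyMeasurable (Filter.Eventually.of_forall fun ω => abs_nonneg _)
          hμσ_int ?_ ?_ ?_ hμσ_le
        · intro n
          refine Filter.Eventually.of_forall fun ω => ?_
          show 0 ≤ μ' ω * σ n ω
          rw [hμσ n ω]
          split_ifs
          · exact abs_nonneg _
          · exact le_rfl
        · refine Filter.Eventually.of_forall fun ω i j hij => ?_
          show μ' ω * σ i ω ≤ μ' ω * σ j ω
          rw [hμσ i ω, hμσ j ω]
          by_cases h1 : |μ' ω| ≤ (i : ℝ)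
          · rw [if_pos h1, if_pos (h1.trans (Nat.cast_le.2 hij))]
          · rw [if_neg h1]
            split_ifs
            · exact abs_nonneg _
            · exact le_rfl
        · refine Filter.Eventually.of_forall fun ω => ?_
          show Tendsto (fun k => μ' ω * σ k ω) atTop (nhds |μ' ω|)
          refine tendsto_atTop_of_eventually_const (i₀ := ⌈|μ' ω|⌉₊) fun k hk => ?_
          rw [hμσ k ω, if_pos ((Nat.le_ceil _).trans (Nat.cast_le.2 hk))]
      exact habsμ_int.mono' hμ'_meas.aestronglyMeasurable
        (Filter.Eventually.of_forall fun ω => (Real.norm_eq_abs _).le)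
    refine hLHS.trans (Eq.trans ?_ hRHS.symm)
    rw [integral_undef hw_nonint, integral_undef hR_nonint]

/-- Double robustness (propensity-score side): with the true propensity score, the AIPW
functional is invariant to misspecification of the outcome regression model. -/
theorem stmt_4 {Ω : Type*} [MeasurableSpace Ω] (P : Measure Ω) [IsProbabilityMeasure P]
    (Y : Ω → ℝ) (D : Ω → ℕ) (Z : Ω → ℤ) (X : Ω → ℝ) (d : ℕ) (z : ℤ)
    (hD : Measurable D) (hZ : Measurable Z) (hX : Measurable X)
    (hDbin : ∀ ω, D ω = 0 ∨ D ω = 1)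
    (hYint : Integrable Y P)
    -- the true propensity score p(d,z | X)
    (ps : Ω → ℝ)
    (hps : ps =ᵐ[P] P[({ω' | D ω' = d ∧ Z ω' = z}).indicator (fun _ => (1 : ℝ))
            | MeasurableSpace.comap X inferInstance])
    (hpos : ∀ᵐ ω ∂P, 0 < ps ω)
    -- the true conditional mean outcome μ(d,z,X) = E[Y | D = d, Z = z, X]
    (μfn : Ω → ℝ)
    (hμ : μfn =ᵐ[P] fun ω =>
      (P[fun ω' => Y ω' * ({ω'' | D ω'' = d ∧ Z ω'' = z}).indicator (fun _ => (1 : ℝ)) ω'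
          | MeasurableSpace.comap X inferInstance]) ω / ps ω)
    -- an arbitrary (possibly misspecified) bounded measurable outcome model m̃(X)
    (mtil : ℝ → ℝ) (hmtil : Measurable mtil) (C : ℝ) (hbd : ∀ x, |mtil x| ≤ C) :
    ∫ ω, mtil (X ω)
        + (({ω' | D ω' = d ∧ Z ω' = z}).indicator (fun _ => (1 : ℝ)) ω / ps ω)
          * (Y ω - mtil (X ω)) ∂P
      = ∫ ω, μfn ω
          + (({ω' | D ω' = d ∧ Z ω' = z}).indicator (fun _ => (1 : ℝ)) ω / ps ω)
            * (Y ω - μfn ω) ∂P := by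
  classical
  rename_i mΩ hPP
  set s : Set Ω := {ω' | D ω' = d ∧ Z ω' = z} with hs_def
  have hs : MeasurableSet s := by
    have he : s = D ⁻¹' {d} ∩ Z ⁻¹' {z} := by
      ext ω; simp [hs_def, Set.mem_setOf_eq]
    rw [he]
    exact (hD (measurableSet_singleton d)).inter (hZ (measurableSet_singleton z))
  set I : Ω → ℝ := s.indicator (fun _ => (1 : ℝ)) with hI_def
  have hImeas : Measurable I := measurable_const.indicator hs
  have hI01 : ∀ ω, I ω = 0 ∨ I ω = 1 := by
    intro ω
    by_cases h : ω ∈ s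
    · right; simp [hI_def, Set.indicator_of_mem h]
    · left; simp [hI_def, Set.indicator_of_notMem h]
  set m : MeasurableSpace Ω := MeasurableSpace.comap X inferInstance with hm_def
  have hm : m ≤ mΩ := by
    rw [hm_def]; exact measurable_iff_comap_le.mp hX
  have hXm : Measurable[m] X := fun t ht => ⟨t, ht, rfl⟩
  have hfm : StronglyMeasurable[m] fun ω => mtil (X ω) := (hmtil.comp hXm).stronglyMeasurable
  have hppos : ∀ᵐ ω ∂P, 0 < (P[I|m]) ω := by
    filter_upwards [hpos, hps] with ω h1 h2
    rw [← h2]; exact h1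
  have key := aipw_main (m0 := mΩ) hm P I Y (fun ω => mtil (X ω)) hImeas hI01 hYint hfm C
    (fun ω => hbd _) hppos
  have hL : ∫ ω, mtil (X ω) + (I ω / ps ω) * (Y ω - mtil (X ω)) ∂P
      = ∫ ω, mtil (X ω) + (I ω / (P[I|m]) ω) * (Y ω - mtil (X ω)) ∂P := by
    refine integral_congr_ae ?_
    filter_upwards [hps] with ω h
    rw [h]
  have hR : ∫ ω, μfn ω + (I ω / ps ω) * (Y ω - μfn ω) ∂P
      = ∫ ω, ((P[fun ω' => Y ω' * I ω'|m]) ω / (P[I|m]) ω)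
          + (I ω / (P[I|m]) ω) * (Y ω - (P[fun ω' => Y ω' * I ω'|m]) ω / (P[I|m]) ω) ∂P := by
    refine integral_congr_ae ?_
    filter_upwards [hps, hμ] with ω h1 h2
    rw [h2, h1]
  exact hL.trans (key.trans hR.symm)
end

section
/- Let Y be integrable, D ∈ {0,1}, Z discrete, X a random variable; let μ(d,z,x) = E[Y | D=d, Z=z, X=x] and p(d,z|X) = P(D=d,Z=z|X) ∈ (ε, 1−ε) a.s. Define for bounded perturbations (h_μ, h_p) the map G(t) = E[ (μ + t h_μ)(d,z,X) + (1{D=d,Z=z}/(p + t h_p)(X)) · (Y − (μ + t h_μ)(d,z,X)) ]. Then G is differentiable at t = 0 and G′(0) = 0. -/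
open MeasureTheory ProbabilityTheory Set

set_option maxHeartbeats 1000000 in
theorem aux_stmt6 {Ω : Type*} {m : MeasurableSpace Ω} [mΩ : MeasurableSpace Ω] (hm : m ≤ mΩ)
    (P : Measure Ω) [IsProbabilityMeasure P]
    (Y I ps μfn hμf hpf : Ω → ℝ) (ε Cm Cq : ℝ) (hε : 0 < ε)
    (hYint : Integrable Y P) (hIm : Measurable I) (hI01 : ∀ ω, 0 ≤ I ω ∧ I ω ≤ 1)
    (hps : ps =ᵐ[P] P[I | m]) (hpsbd : ∀ᵐ ω ∂P, ε < ps ω ∧ ps ω < 1 - ε)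
    (hμ : μfn =ᵐ[P] fun ω => (P[fun ω' => Y ω' * I ω' | m]) ω / ps ω)
    (hμint : Integrable μfn P)
    (hμfMeas : Measurable[m] hμf) (hpfMeas : Measurable[m] hpf)
    (hCm0 : 0 ≤ Cm) (hCq0 : 0 ≤ Cq)
    (hμfbd : ∀ ω, |hμf ω| ≤ Cm) (hpfbd : ∀ ω, |hpf ω| ≤ Cq) :
    HasDerivAt
      (fun t : ℝ =>
        ∫ ω, (μfn ω + t * hμf ω)
            + (I ω / (ps ω + t * hpf ω)) * (Y ω - (μfn ω + t * hμf ω)) ∂P)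
      0 0 := by
  classical
  haveI : IsFiniteMeasure (P.trim hm) := isFiniteMeasure_trim hm
  have hIabs : ∀ ω, |I ω| ≤ 1 := fun ω => abs_le.2 ⟨by linarith [(hI01 ω).1], (hI01 ω).2⟩
  have hIint : Integrable I P := by
    refine (integrable_const (1 : ℝ)).mono' hIm.aestronglyMeasurable ?_
    exact Filter.Eventually.of_forall fun ω => by simpa [Real.norm_eq_abs] using hIabs ω
  set q : Ω → ℝ := P[I | m] with hq_def
  set ν : Ω → ℝ := P[fun ω' => Y ω' * I ω' | m] with hν_def
  have hqm : Measurable[m] q := stronglyMeasurable_condExp.measurable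
  have hνm : Measurable[m] ν := stronglyMeasurable_condExp.measurable
  have hνint : Integrable ν P := integrable_condExp
  have hYI : Integrable (fun ω => Y ω * I ω) P := by
    refine (hYint.bdd_mul (c := 1) hIm.aestronglyMeasurable ?_).congr
      (Filter.Eventually.of_forall fun ω => mul_comm _ _)
    exact Filter.Eventually.of_forall fun ω => by simpa [Real.norm_eq_abs] using hIabs ω
  have hqbd : ∀ᵐ ω ∂P, ε < q ω ∧ q ω < 1 - ε := by
    filter_upwards [hps, hpsbd] with ω h1 h2
    rw [← h1]; exact h2
  -- nuisance ratio functions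
  set g₁ : Ω → ℝ := fun ω => hμf ω / q ω with hg₁_def
  set g₂ : Ω → ℝ := fun ω => hpf ω / (q ω * q ω) with hg₂_def
  set g₃ : Ω → ℝ := fun ω => g₂ ω / q ω with hg₃_def
  have hg₁m : Measurable[m] g₁ := hμfMeas.div hqm
  have hg₂m : Measurable[m] g₂ := hpfMeas.div (hqm.mul hqm)
  have hg₃m : Measurable[m] g₃ := hg₂m.div hqm
  have hg₁bd : ∀ᵐ ω ∂P, ‖g₁ ω‖ ≤ Cm / ε := by
    filter_upwards [hqbd] with ω hq
    have hq0 : 0 < q ω := lt_trans hε hq.1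
    rw [Real.norm_eq_abs, hg₁_def, abs_div, abs_of_pos hq0]
    exact div_le_div₀ hCm0 (hμfbd ω) hε hq.1.le
  have hg₂bd : ∀ᵐ ω ∂P, ‖g₂ ω‖ ≤ Cq / (ε * ε) := by
    filter_upwards [hqbd] with ω hq
    have hq0 : 0 < q ω := lt_trans hε hq.1
    rw [Real.norm_eq_abs, hg₂_def, abs_div, abs_of_pos (mul_pos hq0 hq0)]
    exact div_le_div₀ hCq0 (hpfbd ω) (mul_pos hε hε)
      (mul_le_mul hq.1.le hq.1.le hε.le hq0.le)
  have hg₃bd : ∀ᵐ ω ∂P, ‖g₃ ω‖ ≤ Cq / (ε * ε) / ε := by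
    filter_upwards [hg₂bd, hqbd] with ω h2 hq
    have hq0 : 0 < q ω := lt_trans hε hq.1
    rw [Real.norm_eq_abs, hg₃_def, abs_div, abs_of_pos hq0]
    refine div_le_div₀ (by positivity) ?_ hε hq.1.le
    simpa [Real.norm_eq_abs] using h2
  -- ambient measurability
  have hμfm : Measurable hμf := hμfMeas.mono hm le_rfl
  have hpfm : Measurable hpf := hpfMeas.mono hm le_rfl
  have hg₁am : Measurable g₁ := hg₁m.mono hm le_rfl
  have hg₂am : Measurable g₂ := hg₂m.mono hm le_rfl
  have hg₃am : Measurable g₃ := hg₃m.mono hm le_rfl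
  have hνam : Measurable ν := hνm.mono hm le_rfl
  have hpsam : AEStronglyMeasurable ps P :=
    ((stronglyMeasurable_condExp.mono hm).aestronglyMeasurable).congr hps.symm
  have hμfint : Integrable hμf P := by
    refine (integrable_const Cm).mono' hμfm.aestronglyMeasurable ?_
    exact Filter.Eventually.of_forall fun ω => by simpa [Real.norm_eq_abs] using hμfbd ω

  -- integrability of the pieces of the derivative at 0
  have iC : Integrable (fun ω => g₁ ω * I ω) P :=
    hIint.bdd_mul hg₁am.aestronglyMeasurable hg₁bd
  have iA : Integrable (fun ω => g₂ ω * (Y ω * I ω)) P :=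
    hYI.bdd_mul hg₂am.aestronglyMeasurable hg₂bd
  have iB : Integrable (fun ω => g₃ ω * ν ω * I ω) P := by
    refine (hνint.norm.const_mul (Cq / (ε * ε) / ε)).mono'
      (((hg₃am.mul hνam).mul hIm).aestronglyMeasurable) ?_
    filter_upwards [hg₃bd] with ω h3
    have he : ‖g₃ ω * ν ω * I ω‖ = ‖g₃ ω‖ * ‖ν ω‖ * ‖I ω‖ := by
      simp [Real.norm_eq_abs, abs_mul]
    rw [he]
    calc ‖g₃ ω‖ * ‖ν ω‖ * ‖I ω‖ ≤ (Cq / (ε * ε) / ε) * ‖ν ω‖ * 1 := by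
          refine mul_le_mul (mul_le_mul h3 le_rfl (norm_nonneg _) (by positivity)) ?_
            (norm_nonneg _) (by positivity)
          simpa [Real.norm_eq_abs] using hIabs ω
      _ = Cq / (ε * ε) / ε * ‖ν ω‖ := mul_one _
  -- the three integral identities
  have E1 : ∫ ω, g₁ ω * I ω ∂P = ∫ ω, hμf ω ∂P := by
    have hpull : P[g₁ * I | m] =ᵐ[P] g₁ * q :=
      condExp_stronglyMeasurable_mul_of_bound hm hg₁m.stronglyMeasurable hIint (Cm / ε) hg₁bd
    calc ∫ ω, g₁ ω * I ω ∂P = ∫ ω, (g₁ * I) ω ∂P := rfl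
      _ = ∫ ω, (P[g₁ * I | m]) ω ∂P := (integral_condExp hm).symm
      _ = ∫ ω, (g₁ * q) ω ∂P := integral_congr_ae hpull
      _ = ∫ ω, hμf ω ∂P := by
          refine integral_congr_ae ?_
          filter_upwards [hqbd] with ω hq
          have hq0 : q ω ≠ 0 := (lt_trans hε hq.1).ne'
          simp only [Pi.mul_apply, hg₁_def]
          field_simp
  have E2a : ∫ ω, g₂ ω * (Y ω * I ω) ∂P = ∫ ω, g₂ ω * ν ω ∂P := by
    have hpull : P[g₂ * (fun ω => Y ω * I ω) | m] =ᵐ[P] g₂ * ν :=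
      condExp_stronglyMeasurable_mul_of_bound hm hg₂m.stronglyMeasurable hYI
        (Cq / (ε * ε)) hg₂bd
    calc ∫ ω, g₂ ω * (Y ω * I ω) ∂P = ∫ ω, (g₂ * (fun ω => Y ω * I ω)) ω ∂P := rfl
      _ = ∫ ω, (P[g₂ * (fun ω => Y ω * I ω) | m]) ω ∂P := (integral_condExp hm).symm
      _ = ∫ ω, (g₂ * ν) ω ∂P := integral_congr_ae hpull
      _ = ∫ ω, g₂ ω * ν ω ∂P := rfl
  have E2b : ∫ ω, g₃ ω * ν ω * I ω ∂P = ∫ ω, g₂ ω * ν ω ∂P := by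
    have hf₂sm : StronglyMeasurable[m] (fun ω => g₃ ω * ν ω) :=
      (hg₃m.mul hνm).stronglyMeasurable
    have hf₂I : Integrable ((fun ω => g₃ ω * ν ω) * I) P := iB
    have hpull : P[(fun ω => g₃ ω * ν ω) * I | m] =ᵐ[P] (fun ω => g₃ ω * ν ω) * q :=
      condExp_mul_of_stronglyMeasurable_left hf₂sm hf₂I hIint
    calc ∫ ω, g₃ ω * ν ω * I ω ∂P = ∫ ω, ((fun ω => g₃ ω * ν ω) * I) ω ∂P := rfl
      _ = ∫ ω, (P[(fun ω => g₃ ω * ν ω) * I | m]) ω ∂P := (integral_condExp hm).symm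
      _ = ∫ ω, ((fun ω => g₃ ω * ν ω) * q) ω ∂P := integral_congr_ae hpull
      _ = ∫ ω, g₂ ω * ν ω ∂P := by
          refine integral_congr_ae ?_
          filter_upwards [hqbd] with ω hq
          have hq0 : q ω ≠ 0 := (lt_trans hε hq.1).ne'
          simp only [Pi.mul_apply, hg₃_def]
          field_simp
  clear_value q ν g₁ g₂ g₃
  -- radius of the ball
  set δ : ℝ := min 1 (ε / (2 * (Cq + 1))) with hδ_def
  have hδpos : 0 < δ := lt_min one_pos (by positivity)
  have hδle1 : δ ≤ 1 := min_le_left _ _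
  have hδle : δ ≤ ε / (2 * (Cq + 1)) := min_le_right _ _
  have hvlb : ∀ ω, ε < ps ω → ∀ t : ℝ, |t| < δ → ε / 2 < ps ω + t * hpf ω := by
    intro ω hpsω t ht
    have h1 : |t * hpf ω| ≤ ε / 2 := by
      rw [abs_mul]
      have h2 : |t| * |hpf ω| ≤ ε / (2 * (Cq + 1)) * Cq :=
        mul_le_mul (ht.le.trans hδle) (hpfbd ω) (abs_nonneg _) (by positivity)
      have h3 : ε / (2 * (Cq + 1)) * Cq ≤ ε / 2 := by
        rw [div_mul_eq_mul_div, div_le_div_iff₀ (by positivity) (by positivity)]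
        nlinarith
      linarith
    have h4 := neg_abs_le (t * hpf ω)
    linarith
  -- measurability of the integrand family
  have hF_meas : ∀ t : ℝ, AEStronglyMeasurable
      (fun ω => (μfn ω + t * hμf ω)
        + (I ω / (ps ω + t * hpf ω)) * (Y ω - (μfn ω + t * hμf ω))) P := by
    intro t
    have h1 : AEMeasurable (fun ω => ps ω + t * hpf ω) P :=
      hpsam.aemeasurable.add (hpfm.aemeasurable.const_mul t)
    have h2 : AEMeasurable (fun ω => μfn ω + t * hμf ω) P :=
      hμint.aemeasurable.add (hμfm.aemeasurable.const_mul t)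
    exact (h2.add ((hIm.aemeasurable.div h1).mul
      (hYint.aemeasurable.sub h2))).aestronglyMeasurable
  -- integrability at t = 0
  have hF_int : Integrable
      (fun ω => (μfn ω + (0:ℝ) * hμf ω)
        + (I ω / (ps ω + (0:ℝ) * hpf ω)) * (Y ω - (μfn ω + (0:ℝ) * hμf ω))) P := by
    have he : (fun ω => (μfn ω + (0:ℝ) * hμf ω)
        + (I ω / (ps ω + (0:ℝ) * hpf ω)) * (Y ω - (μfn ω + (0:ℝ) * hμf ω)))
        = fun ω => μfn ω + (I ω / ps ω) * (Y ω - μfn ω) := by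
      funext ω; ring
    rw [he]
    refine hμint.add ((hYint.sub hμint).bdd_mul (c := 1/ε)
      ((hIm.aemeasurable.div hpsam.aemeasurable).aestronglyMeasurable) ?_)
    filter_upwards [hpsbd] with ω h
    have hps0 : 0 < ps ω := lt_trans hε h.1
    rw [Real.norm_eq_abs, abs_div, abs_of_pos hps0]
    exact div_le_div₀ zero_le_one (hIabs ω) hε h.1.le
  -- measurability of the derivative at 0
  have hF'_meas : AEStronglyMeasurable
      (fun ω => hμf ω
        - I ω * hpf ω * (Y ω - (μfn ω + (0:ℝ) * hμf ω))
            / ((ps ω + (0:ℝ) * hpf ω) * (ps ω + (0:ℝ) * hpf ω))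
        - I ω * hμf ω / (ps ω + (0:ℝ) * hpf ω)) P := by
    have h1 : AEMeasurable (fun ω => ps ω + (0:ℝ) * hpf ω) P :=
      hpsam.aemeasurable.add (hpfm.aemeasurable.const_mul 0)
    have h2 : AEMeasurable (fun ω => μfn ω + (0:ℝ) * hμf ω) P :=
      hμint.aemeasurable.add (hμfm.aemeasurable.const_mul 0)
    exact ((hμfm.aemeasurable.sub (((hIm.aemeasurable.mul hpfm.aemeasurable).mul
      (hYint.aemeasurable.sub h2)).div (h1.mul h1))).sub
      ((hIm.aemeasurable.mul hμfm.aemeasurable).div h1)).aestronglyMeasurable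
  -- uniform bound on the derivative
  have h_bound : ∀ᵐ ω ∂P, ∀ t ∈ Metric.ball (0:ℝ) δ,
      ‖hμf ω
        - I ω * hpf ω * (Y ω - (μfn ω + t * hμf ω))
            / ((ps ω + t * hpf ω) * (ps ω + t * hpf ω))
        - I ω * hμf ω / (ps ω + t * hpf ω)‖
      ≤ Cm + Cq * (|Y ω| + |μfn ω| + Cm) / (ε / 2 * (ε / 2)) + Cm / (ε / 2) := by
    filter_upwards [hpsbd] with ω hpsω t ht
    rw [Metric.mem_ball, dist_zero_right, Real.norm_eq_abs] at ht
    have hv : ε / 2 < ps ω + t * hpf ω := hvlb ω hpsω.1 t ht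
    have hv0 : 0 < ps ω + t * hpf ω := lt_trans (by positivity) hv
    have hb2 : |I ω * hpf ω * (Y ω - (μfn ω + t * hμf ω))
        / ((ps ω + t * hpf ω) * (ps ω + t * hpf ω))|
        ≤ Cq * (|Y ω| + |μfn ω| + Cm) / (ε / 2 * (ε / 2)) := by
      rw [abs_div, abs_of_pos (mul_pos hv0 hv0)]
      refine div_le_div₀ (by positivity) ?_ (by positivity)
        (mul_le_mul hv.le hv.le (by positivity) hv0.le)
      have hw : |Y ω - (μfn ω + t * hμf ω)| ≤ |Y ω| + |μfn ω| + Cm := by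
        have h1 : |t * hμf ω| ≤ Cm := by
          rw [abs_mul]
          calc |t| * |hμf ω| ≤ 1 * Cm :=
                mul_le_mul (ht.le.trans hδle1) (hμfbd ω) (abs_nonneg _) zero_le_one
            _ = Cm := one_mul _
        calc |Y ω - (μfn ω + t * hμf ω)| ≤ |Y ω| + |μfn ω + t * hμf ω| := abs_sub _ _
          _ ≤ |Y ω| + (|μfn ω| + |t * hμf ω|) := by
              exact add_le_add_right (abs_add_le _ _) _
          _ ≤ |Y ω| + |μfn ω| + Cm := by linarith
      calc |I ω * hpf ω * (Y ω - (μfn ω + t * hμf ω))|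
          = |I ω| * |hpf ω| * |Y ω - (μfn ω + t * hμf ω)| := by rw [abs_mul, abs_mul]
        _ ≤ 1 * Cq * (|Y ω| + |μfn ω| + Cm) :=
            mul_le_mul (mul_le_mul (hIabs ω) (hpfbd ω) (abs_nonneg _) zero_le_one)
              hw (abs_nonneg _) (by positivity)
        _ = Cq * (|Y ω| + |μfn ω| + Cm) := by ring
    have hb3 : |I ω * hμf ω / (ps ω + t * hpf ω)| ≤ Cm / (ε / 2) := by
      rw [abs_div, abs_of_pos hv0]
      refine div_le_div₀ hCm0 ?_ (by positivity) hv.le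
      calc |I ω * hμf ω| = |I ω| * |hμf ω| := abs_mul _ _
        _ ≤ 1 * Cm := mul_le_mul (hIabs ω) (hμfbd ω) (abs_nonneg _) zero_le_one
        _ = Cm := one_mul _
    rw [Real.norm_eq_abs]
    calc |hμf ω
        - I ω * hpf ω * (Y ω - (μfn ω + t * hμf ω))
            / ((ps ω + t * hpf ω) * (ps ω + t * hpf ω))
        - I ω * hμf ω / (ps ω + t * hpf ω)|
        ≤ |hμf ω
            - I ω * hpf ω * (Y ω - (μfn ω + t * hμf ω))
                / ((ps ω + t * hpf ω) * (ps ω + t * hpf ω))|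
          + |I ω * hμf ω / (ps ω + t * hpf ω)| := abs_sub _ _
      _ ≤ (|hμf ω| + |I ω * hpf ω * (Y ω - (μfn ω + t * hμf ω))
            / ((ps ω + t * hpf ω) * (ps ω + t * hpf ω))|)
          + |I ω * hμf ω / (ps ω + t * hpf ω)| :=
          add_le_add_left (abs_sub _ _) _
      _ ≤ Cm + Cq * (|Y ω| + |μfn ω| + Cm) / (ε / 2 * (ε / 2)) + Cm / (ε / 2) :=
          add_le_add (add_le_add (hμfbd ω) hb2) hb3
  -- integrability of the bound
  have hbint : Integrable
      (fun ω => Cm + Cq * (|Y ω| + |μfn ω| + Cm) / (ε / 2 * (ε / 2)) + Cm / (ε / 2)) P := by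
    have h1 : Integrable (fun ω => |Y ω| + |μfn ω| + Cm) P :=
      (hYint.abs.add hμint.abs).add (integrable_const _)
    have h2 := h1.const_mul (Cq / (ε / 2 * (ε / 2)))
    refine (((integrable_const Cm).add h2).add (integrable_const (Cm / (ε / 2)))).congr ?_
    refine Filter.Eventually.of_forall fun ω => ?_
    simp only [Pi.add_apply]
    ring
  -- pointwise differentiability
  have h_diff : ∀ᵐ ω ∂P, ∀ t ∈ Metric.ball (0:ℝ) δ,
      HasDerivAt (fun s : ℝ => (μfn ω + s * hμf ω)
        + (I ω / (ps ω + s * hpf ω)) * (Y ω - (μfn ω + s * hμf ω)))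
        (hμf ω
          - I ω * hpf ω * (Y ω - (μfn ω + t * hμf ω))
              / ((ps ω + t * hpf ω) * (ps ω + t * hpf ω))
          - I ω * hμf ω / (ps ω + t * hpf ω)) t := by
    filter_upwards [hpsbd] with ω hpsω t ht
    rw [Metric.mem_ball, dist_zero_right, Real.norm_eq_abs] at ht
    have hv : ε / 2 < ps ω + t * hpf ω := hvlb ω hpsω.1 t ht
    have hvne : ps ω + t * hpf ω ≠ 0 := (lt_trans (by positivity) hv).ne'
    have hu : HasDerivAt (fun s : ℝ => μfn ω + s * hμf ω) (hμf ω) t :=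
      (hasDerivAt_mul_const (hμf ω)).const_add (μfn ω)
    have hv' : HasDerivAt (fun s : ℝ => ps ω + s * hpf ω) (hpf ω) t :=
      (hasDerivAt_mul_const (hpf ω)).const_add (ps ω)
    have hw : HasDerivAt (fun s : ℝ => I ω / (ps ω + s * hpf ω))
        ((0 * (ps ω + t * hpf ω) - I ω * hpf ω) / (ps ω + t * hpf ω) ^ 2) t :=
      (hasDerivAt_const t (I ω)).div hv' hvne
    have hs : HasDerivAt (fun s : ℝ => Y ω - (μfn ω + s * hμf ω)) (0 - hμf ω) t :=
      (hasDerivAt_const t (Y ω)).sub hu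
    have hmain := hu.add (hw.mul hs)
    exact hmain.congr_deriv (by ring)
  -- apply the dominated differentiation theorem
  have key := hasDerivAt_integral_of_dominated_loc_of_deriv_le (μ := P) (x₀ := (0:ℝ))
    (F := fun t ω => (μfn ω + t * hμf ω)
      + (I ω / (ps ω + t * hpf ω)) * (Y ω - (μfn ω + t * hμf ω)))
    (F' := fun t ω => hμf ω
      - I ω * hpf ω * (Y ω - (μfn ω + t * hμf ω))
          / ((ps ω + t * hpf ω) * (ps ω + t * hpf ω))
      - I ω * hμf ω / (ps ω + t * hpf ω))
    (bound := fun ω => Cm + Cq * (|Y ω| + |μfn ω| + Cm) / (ε / 2 * (ε / 2)) + Cm / (ε / 2))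
    (Metric.ball_mem_nhds _ hδpos) (Filter.Eventually.of_forall hF_meas) hF_int hF'_meas h_bound hbint h_diff
  -- the derivative at 0 vanishes
  have hzero : ∫ ω, (hμf ω
      - I ω * hpf ω * (Y ω - (μfn ω + (0:ℝ) * hμf ω))
          / ((ps ω + (0:ℝ) * hpf ω) * (ps ω + (0:ℝ) * hpf ω))
      - I ω * hμf ω / (ps ω + (0:ℝ) * hpf ω)) ∂P = 0 := by
    have hae : (fun ω => hμf ω
        - I ω * hpf ω * (Y ω - (μfn ω + (0:ℝ) * hμf ω))
            / ((ps ω + (0:ℝ) * hpf ω) * (ps ω + (0:ℝ) * hpf ω))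
        - I ω * hμf ω / (ps ω + (0:ℝ) * hpf ω))
        =ᵐ[P] fun ω => hμf ω - g₂ ω * (Y ω * I ω) + g₃ ω * ν ω * I ω - g₁ ω * I ω := by
      filter_upwards [hps, hpsbd, hμ] with ω h1 h2 h3
      have hps0 : ps ω ≠ 0 := (lt_trans hε h2.1).ne'
      have h3' : μfn ω = ν ω / ps ω := h3
      have h1' : ps ω = q ω := h1
      have hq0 : q ω ≠ 0 := h1' ▸ hps0
      simp only [hg₁_def, hg₂_def, hg₃_def]
      rw [h3', h1']
      simp only [zero_mul, add_zero]
      field_simp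
      ring
    rw [integral_congr_ae hae]
    have iD : Integrable (fun ω => hμf ω - g₂ ω * (Y ω * I ω)) P := hμfint.sub iA
    have iAB : Integrable (fun ω => hμf ω - g₂ ω * (Y ω * I ω) + g₃ ω * ν ω * I ω) P :=
      iD.add iB
    rw [integral_sub iAB iC, integral_add iD iB, integral_sub hμfint iA, E2a, E2b, E1]
    ring
  have h2 := key.2
  beta_reduce at h2
  rw [hzero] at h2
  exact h2

/-- Neyman orthogonality of the doubly robust (AIPW) score: the Gateaux derivative of the
AIPW functional with respect to joint perturbations of the outcome regression and the
propensity score vanishes at the true nuisance parameters. -/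
theorem stmt_6 {Ω : Type*} [MeasurableSpace Ω] (P : Measure Ω) [IsProbabilityMeasure P]
    (Y : Ω → ℝ) (D : Ω → ℕ) (Z : Ω → ℤ) (X : Ω → ℝ) (d : ℕ) (z : ℤ)
    (hD : Measurable D) (hZ : Measurable Z) (hX : Measurable X)
    (hDbin : ∀ ω, D ω = 0 ∨ D ω = 1)
    (hYint : Integrable Y P)
    -- the true propensity score p(d,z | X), bounded away from 0 and 1
    (ps : Ω → ℝ) (ε : ℝ) (hε : 0 < ε)
    (hps : ps =ᵐ[P] P[({ω' | D ω' = d ∧ Z ω' = z}).indicator (fun _ => (1 : ℝ))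
            | MeasurableSpace.comap X inferInstance])
    (hpsbd : ∀ᵐ ω ∂P, ε < ps ω ∧ ps ω < 1 - ε)
    -- the true conditional mean outcome μ(d,z,X) = E[Y | D = d, Z = z, X]
    (μfn : Ω → ℝ)
    (hμ : μfn =ᵐ[P] fun ω =>
      (P[fun ω' => Y ω' * ({ω'' | D ω'' = d ∧ Z ω'' = z}).indicator (fun _ => (1 : ℝ)) ω'
          | MeasurableSpace.comap X inferInstance]) ω / ps ω)
    (hμint : Integrable μfn P)
    -- bounded measurable perturbations of the nuisance functions (functions of X)
    (hμf hpf : Ω → ℝ)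
    (hμfMeas : Measurable[MeasurableSpace.comap X inferInstance] hμf)
    (hpfMeas : Measurable[MeasurableSpace.comap X inferInstance] hpf)
    (Cμ Cp : ℝ) (hμfbd : ∀ ω, |hμf ω| ≤ Cμ) (hpfbd : ∀ ω, |hpf ω| ≤ Cp) :
    HasDerivAt
      (fun t : ℝ =>
        ∫ ω, (μfn ω + t * hμf ω)
            + (({ω' | D ω' = d ∧ Z ω' = z}).indicator (fun _ => (1 : ℝ)) ω
                / (ps ω + t * hpf ω))
              * (Y ω - (μfn ω + t * hμf ω)) ∂P)
      0 0 := by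
  have hSmeas : MeasurableSet {ω' | D ω' = d ∧ Z ω' = z} :=
    (hD (measurableSet_singleton d)).inter (hZ (measurableSet_singleton z))
  refine aux_stmt6 hX.comap_le P Y
    (({ω' | D ω' = d ∧ Z ω' = z}).indicator (fun _ => (1 : ℝ))) ps μfn hμf hpf ε |Cμ| |Cp|
    hε hYint (measurable_const.indicator hSmeas) ?_ hps hpsbd hμ hμint hμfMeas hpfMeas
    (abs_nonneg _) (abs_nonneg _)
    (fun ω => (hμfbd ω).trans (le_abs_self _))
    (fun ω => (hpfbd ω).trans (le_abs_self _))
  intro ω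
  by_cases h : ω ∈ {ω' | D ω' = d ∧ Z ω' = z} <;>
    simp [indicator_of_mem, indicator_of_notMem, h]
end

section
/- Let Y be integrable, Ż discrete, and Z̃ a random variable with a measurable set B such that p(Ż) := P(Z̃ ∈ B | Ż) ∈ (ε, 1−ε) almost surely. Define μ(Ż) = E[Y | Ż, Z̃ ∈ B] and ν(Ż) = E[Y | Ż, Z̃ ∉ B]. Then E[ (Y − μ(Ż)) · 1{Z̃ ∈ B} / p(Ż) − (Y − ν(Ż)) · 1{Z̃ ∉ B} / (1 − p(Ż)) ] = 0. -/
open MeasureTheory ProbabilityTheory Set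

private lemma int_mul_of_bdd {Ω : Type*} [MeasurableSpace Ω] {P : Measure Ω} {f g : Ω → ℝ}
    (hf : AEStronglyMeasurable f P) {C : ℝ} (hbd : ∀ᵐ ω ∂P, |f ω| ≤ C)
    (hg : Integrable g P) : Integrable (fun ω => f ω * g ω) P := by
  refine (hg.norm.const_mul C).mono' (hf.mul hg.aestronglyMeasurable) ?_
  filter_upwards [hbd] with ω hω
  calc ‖f ω * g ω‖ = |f ω| * ‖g ω‖ := by rw [norm_mul]; rfl
    _ ≤ C * ‖g ω‖ := mul_le_mul_of_nonneg_right hω (norm_nonneg _)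

private lemma integral_mul_condexp {Ω : Type*} {m : MeasurableSpace Ω}
    [mΩ : MeasurableSpace Ω] (P : Measure Ω)
    [IsProbabilityMeasure P] (hm : m ≤ mΩ) {f g : Ω → ℝ}
    (hf : StronglyMeasurable[m] f) {C : ℝ} (hbd : ∀ᵐ ω ∂P, |f ω| ≤ C)
    (hg : Integrable g P) :
    ∫ ω, f ω * g ω ∂P = ∫ ω, f ω * (P[g|m]) ω ∂P := by
  have hfg : Integrable (f * g) P := by
    refine (hg.norm.const_mul C).mono'
      ((hf.mono hm).aestronglyMeasurable.mul hg.aestronglyMeasurable) ?_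
    filter_upwards [hbd] with ω hω
    calc ‖f ω * g ω‖ = |f ω| * ‖g ω‖ := by rw [norm_mul]; rfl
      _ ≤ C * ‖g ω‖ := mul_le_mul_of_nonneg_right hω (norm_nonneg _)
  calc ∫ ω, f ω * g ω ∂P = ∫ ω, (P[f * g|m]) ω ∂P := (integral_condExp hm).symm
    _ = ∫ ω, f ω * (P[g|m]) ω ∂P :=
        integral_congr_ae (condExp_mul_of_stronglyMeasurable_left hf hfg hg)

private lemma stmt_10_aux {Ω : Type*} {m : MeasurableSpace Ω}
    [mΩ : MeasurableSpace Ω] (P : Measure Ω)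
    [IsProbabilityMeasure P] (hm : m ≤ mΩ)
    {Y I J : Ω → ℝ} (hY : Measurable Y) (hYint : Integrable Y P)
    (hImeas : Measurable I) (hJmeas : Measurable J)
    (hIabs : ∀ ω, |I ω| ≤ 1) (hJabs : ∀ ω, |J ω| ≤ 1) (hJI : ∀ ω, J ω = 1 - I ω)
    {p μ ν : Ω → ℝ} {ε : ℝ} (hε : 0 < ε)
    (hp : p =ᵐ[P] P[I|m]) (hpbd : ∀ᵐ ω ∂P, ε < p ω ∧ p ω < 1 - ε)
    (hμ : μ =ᵐ[P] fun ω => (P[fun ω' => Y ω' * I ω'|m]) ω / p ω)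
    (hν : ν =ᵐ[P] fun ω => (P[fun ω' => Y ω' * J ω'|m]) ω / (1 - p ω)) :
    ∫ ω, (Y ω - μ ω) * I ω / p ω - (Y ω - ν ω) * J ω / (1 - p ω) ∂P = 0 := by
  have hIint : Integrable I P := by
    refine (integrable_const (1 : ℝ)).mono' hImeas.aestronglyMeasurable ?_
    exact Filter.Eventually.of_forall fun ω => by simpa using hIabs ω
  have hJint : Integrable J P := by
    refine (integrable_const (1 : ℝ)).mono' hJmeas.aestronglyMeasurable ?_
    exact Filter.Eventually.of_forall fun ω => by simpa using hJabs ω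
  have hYI : Integrable (fun ω => Y ω * I ω) P := by
    have := int_mul_of_bdd hImeas.aestronglyMeasurable
      (Filter.Eventually.of_forall hIabs) hYint
    exact this.congr (Filter.Eventually.of_forall fun ω => mul_comm _ _)
  have hYJ : Integrable (fun ω => Y ω * J ω) P := by
    have := int_mul_of_bdd hJmeas.aestronglyMeasurable
      (Filter.Eventually.of_forall hJabs) hYint
    exact this.congr (Filter.Eventually.of_forall fun ω => mul_comm _ _)
  set p' : Ω → ℝ := P[I|m] with hp'_def
  set g1 : Ω → ℝ := P[fun ω => Y ω * I ω|m] with hg1_def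
  set g2 : Ω → ℝ := P[fun ω => Y ω * J ω|m] with hg2_def
  have hp'bd : ∀ᵐ ω ∂P, ε < p' ω ∧ p' ω < 1 - ε := by
    filter_upwards [hp, hpbd] with ω h1 h2
    rw [← h1]; exact h2
  have hw1 : StronglyMeasurable[m] fun ω => (p' ω)⁻¹ :=
    (stronglyMeasurable_condExp.measurable.inv).stronglyMeasurable
  have hw2 : StronglyMeasurable[m] fun ω => (1 - p' ω)⁻¹ :=
    ((measurable_const.sub stronglyMeasurable_condExp.measurable).inv).stronglyMeasurable
  have hw1sq : StronglyMeasurable[m] fun ω => ((p' ω)⁻¹) ^ 2 :=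
    (hw1.measurable.pow_const 2).stronglyMeasurable
  have hw2sq : StronglyMeasurable[m] fun ω => ((1 - p' ω)⁻¹) ^ 2 :=
    (hw2.measurable.pow_const 2).stronglyMeasurable
  have hw1bd : ∀ᵐ ω ∂P, |(p' ω)⁻¹| ≤ ε⁻¹ := by
    filter_upwards [hp'bd] with ω hω
    have h0 : 0 < p' ω := hε.trans hω.1
    rw [abs_of_pos (inv_pos.mpr h0)]
    exact inv_anti₀ hε hω.1.le
  have hw2bd : ∀ᵐ ω ∂P, |(1 - p' ω)⁻¹| ≤ ε⁻¹ := by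
    filter_upwards [hp'bd] with ω hω
    have h0 : 0 < 1 - p' ω := by linarith [hω.2]
    rw [abs_of_pos (inv_pos.mpr h0)]
    exact inv_anti₀ hε (by linarith [hω.2])
  have hw1sqbd : ∀ᵐ ω ∂P, |((p' ω)⁻¹) ^ 2| ≤ ε⁻¹ ^ 2 := by
    filter_upwards [hw1bd] with ω hω
    rw [abs_pow]; exact pow_le_pow_left₀ (abs_nonneg _) hω 2
  have hw2sqbd : ∀ᵐ ω ∂P, |((1 - p' ω)⁻¹) ^ 2| ≤ ε⁻¹ ^ 2 := by
    filter_upwards [hw2bd] with ω hω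
    rw [abs_pow]; exact pow_le_pow_left₀ (abs_nonneg _) hω 2
  have hg1I : Integrable (fun ω => g1 ω * I ω) P := by
    have := int_mul_of_bdd hImeas.aestronglyMeasurable
      (Filter.Eventually.of_forall hIabs) (integrable_condExp (μ := P) (m := m) (f := fun ω => Y ω * I ω))
    exact this.congr (Filter.Eventually.of_forall fun ω => mul_comm _ _)
  have hg2J : Integrable (fun ω => g2 ω * J ω) P := by
    have := int_mul_of_bdd hJmeas.aestronglyMeasurable
      (Filter.Eventually.of_forall hJabs) (integrable_condExp (μ := P) (m := m) (f := fun ω => Y ω * J ω))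
    exact this.congr (Filter.Eventually.of_forall fun ω => mul_comm _ _)
  have hT1 : Integrable (fun ω => (p' ω)⁻¹ * (Y ω * I ω)) P :=
    int_mul_of_bdd (hw1.mono hm).aestronglyMeasurable hw1bd hYI
  have hT2 : Integrable (fun ω => ((p' ω)⁻¹) ^ 2 * (g1 ω * I ω)) P :=
    int_mul_of_bdd (hw1sq.mono hm).aestronglyMeasurable hw1sqbd hg1I
  have hT3 : Integrable (fun ω => (1 - p' ω)⁻¹ * (Y ω * J ω)) P :=
    int_mul_of_bdd (hw2.mono hm).aestronglyMeasurable hw2bd hYJ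
  have hT4 : Integrable (fun ω => ((1 - p' ω)⁻¹) ^ 2 * (g2 ω * J ω)) P :=
    int_mul_of_bdd (hw2sq.mono hm).aestronglyMeasurable hw2sqbd hg2J
  have hae : (fun ω => (Y ω - μ ω) * I ω / p ω - (Y ω - ν ω) * J ω / (1 - p ω))
      =ᵐ[P] fun ω => ((p' ω)⁻¹ * (Y ω * I ω) - ((p' ω)⁻¹) ^ 2 * (g1 ω * I ω))
        - ((1 - p' ω)⁻¹ * (Y ω * J ω) - ((1 - p' ω)⁻¹) ^ 2 * (g2 ω * J ω)) := by
    filter_upwards [hp, hμ, hν, hpbd] with ω h1 h2 h3 h4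
    have hp0 : p ω ≠ 0 := (hε.trans h4.1).ne'
    have hp1 : 1 - p ω ≠ 0 := by have := h4.2; intro h; linarith
    rw [h2, h3, ← h1]
    field_simp
  rw [integral_congr_ae hae]
  have hT12 : Integrable (fun ω => (p' ω)⁻¹ * (Y ω * I ω)
      - ((p' ω)⁻¹) ^ 2 * (g1 ω * I ω)) P := hT1.sub hT2
  have hT34 : Integrable (fun ω => (1 - p' ω)⁻¹ * (Y ω * J ω)
      - ((1 - p' ω)⁻¹) ^ 2 * (g2 ω * J ω)) P := hT3.sub hT4
  rw [integral_sub hT12 hT34, integral_sub hT1 hT2, integral_sub hT3 hT4]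
  have E1 : ∫ ω, (p' ω)⁻¹ * (Y ω * I ω) ∂P = ∫ ω, (p' ω)⁻¹ * g1 ω ∂P :=
    integral_mul_condexp P hm hw1 hw1bd hYI
  have E2 : ∫ ω, ((p' ω)⁻¹) ^ 2 * (g1 ω * I ω) ∂P = ∫ ω, (p' ω)⁻¹ * g1 ω ∂P := by
    rw [integral_mul_condexp P hm hw1sq hw1sqbd hg1I]
    have hpull : P[fun ω => g1 ω * I ω|m] =ᵐ[P] fun ω => g1 ω * p' ω :=
      condExp_mul_of_stronglyMeasurable_left (μ := P) (m := m)
        (stronglyMeasurable_condExp (f := fun ω => Y ω * I ω)) hg1I hIint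
    refine integral_congr_ae ?_
    filter_upwards [hpull, hp'bd] with ω hω hbd
    have hp0 : p' ω ≠ 0 := (hε.trans hbd.1).ne'
    rw [hω]
    field_simp
  have E3 : ∫ ω, (1 - p' ω)⁻¹ * (Y ω * J ω) ∂P = ∫ ω, (1 - p' ω)⁻¹ * g2 ω ∂P :=
    integral_mul_condexp P hm hw2 hw2bd hYJ
  have E4 : ∫ ω, ((1 - p' ω)⁻¹) ^ 2 * (g2 ω * J ω) ∂P = ∫ ω, (1 - p' ω)⁻¹ * g2 ω ∂P := by
    rw [integral_mul_condexp P hm hw2sq hw2sqbd hg2J]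
    have hJeq : P[J|m] =ᵐ[P] fun ω => 1 - p' ω := by
      have h1 : J = fun ω => 1 - I ω := funext hJI
      rw [h1]
      have hsub : P[fun ω => (fun _ => (1:ℝ)) ω - I ω|m]
          =ᵐ[P] P[fun _ => (1:ℝ)|m] - P[I|m] := condExp_sub (integrable_const 1) hIint m
      have hconst : P[fun _ => (1:ℝ)|m] = fun _ => (1:ℝ) := condExp_const hm 1
      filter_upwards [hsub] with ω hω
      simpa [hconst] using hω
    have hpull : P[fun ω => g2 ω * J ω|m] =ᵐ[P] fun ω => g2 ω * (P[J|m]) ω :=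
      condExp_mul_of_stronglyMeasurable_left (μ := P) (m := m)
        (stronglyMeasurable_condExp (f := fun ω => Y ω * J ω)) hg2J hJint
    refine integral_congr_ae ?_
    filter_upwards [hpull, hJeq, hp'bd] with ω hω hJω hbd
    have hp1 : 1 - p' ω ≠ 0 := by have := hbd.2; intro h; linarith
    rw [hω, hJω]
    field_simp
  rw [E1, E2, E3, E4]
  ring

/-- Unbiasedness of the inverse-probability-weighted correction terms in the
Neyman-orthogonal score for the exposure-validity test: each weighted residual term
has mean zero when the conditional means and the conditional cell probability are
correctly specified. -/
theorem stmt_10 {Ω : Type*} [MeasurableSpace Ω] (P : Measure Ω) [IsProbabilityMeasure P]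
    {α : Type*} [MeasurableSpace α] [MeasurableSingletonClass α] [Countable α]
    (Y : Ω → ℝ) (Zd : Ω → α) (Zt : Ω → ℝ)
    (hY : Measurable Y) (hZd : Measurable Zd) (hZt : Measurable Zt)
    (hYint : Integrable Y P)
    (B : Set ℝ) (hB : MeasurableSet B)
    -- p(Ż) = P(Z̃ ∈ B | Ż) ∈ (ε, 1-ε) a.s.
    (p : Ω → ℝ) (ε : ℝ) (hε : 0 < ε)
    (hp : p =ᵐ[P] P[(Zt ⁻¹' B).indicator (fun _ => (1 : ℝ))
        | MeasurableSpace.comap Zd inferInstance])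
    (hpbd : ∀ᵐ ω ∂P, ε < p ω ∧ p ω < 1 - ε)
    -- μ(Ż) = E[Y | Ż, Z̃ ∈ B] and ν(Ż) = E[Y | Ż, Z̃ ∉ B]
    (μ ν : Ω → ℝ)
    (hμ : μ =ᵐ[P] fun ω =>
      (P[fun ω' => Y ω' * (Zt ⁻¹' B).indicator (fun _ => (1 : ℝ)) ω'
          | MeasurableSpace.comap Zd inferInstance]) ω / p ω)
    (hν : ν =ᵐ[P] fun ω =>
      (P[fun ω' => Y ω' * ((Zt ⁻¹' B)ᶜ).indicator (fun _ => (1 : ℝ)) ω'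
          | MeasurableSpace.comap Zd inferInstance]) ω / (1 - p ω)) :
    ∫ ω, (Y ω - μ ω) * (Zt ⁻¹' B).indicator (fun _ => (1 : ℝ)) ω / p ω
        - (Y ω - ν ω) * ((Zt ⁻¹' B)ᶜ).indicator (fun _ => (1 : ℝ)) ω / (1 - p ω) ∂P
      = 0 := by
  have hBm : MeasurableSet (Zt ⁻¹' B) := hZt hB
  refine stmt_10_aux P hZd.comap_le hY hYint
    (measurable_const.indicator hBm) (measurable_const.indicator hBm.compl)
    (fun ω => ?_) (fun ω => ?_) (fun ω => ?_) hε hp hpbd hμ hν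
  · by_cases h : ω ∈ Zt ⁻¹' B <;> simp [indicator_apply, h]
  · by_cases h : ω ∈ (Zt ⁻¹' B)ᶜ <;> simp [indicator_apply, h]
  · by_cases h : ω ∈ Zt ⁻¹' B <;> simp [indicator_apply, h]
end

section
/- Let Y, D, Z, X be random variables with D ∈ {0,1}, Z ∈ {z, z′} discrete, Y integrable; assume consistency Y = Y(d,ζ) on {D=d, Z=ζ}, conditional exogeneity Y(d,ζ) ⟂ (D,Z) | X, and common support p(d,ζ|X) := P(D=d, Z=ζ|X) > 0 a.s. Then the total effect Δ(z,z′) := E[Y(1,z) − Y(0,z′)] satisfies Δ(z,z′) = E[ Y·D·1{Z=z}/p(1,z|X) − Y·(1−D)·1{Z=z′}/p(0,z′|X) ], and Δ(z,z′) = γ(z) + δ(0, z, z′), where γ(z) = E[Y(1,z) − Y(0,z)] is the direct effect and δ(0,z,z′) = E[Y(0,z) − Y(0,z′)] is the interference effect. -/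
open MeasureTheory ProbabilityTheory Set Filter

section IPWAux
variable {Ω : Type*} {m : MeasurableSpace Ω} [mΩ : MeasurableSpace Ω] [StandardBorelSpace Ω]

lemma ipw_kernel_eq (μ : Measure Ω) [IsProbabilityMeasure μ]
    (hm : m ≤ mΩ)
    {W : Ω → ℝ} (hWm : Measurable W)
    {V : Ω → ℝ × ℤ} (hVm : Measurable V)
    (hindep : CondIndepFun m hm W V μ)
    {t : Set (ℝ × ℤ)} (ht : MeasurableSet t) :
    ∀ᵐ ω ∂μ, ((condExpKernel μ m ω).restrict (V ⁻¹' t)).map W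
      = (condExpKernel μ m ω (V ⁻¹' t)) • ((condExpKernel μ m ω).map W) := by
  have hA : MeasurableSet (V ⁻¹' t) := hVm ht
  have h := Kernel.indepFun_iff_measure_inter_preimage_eq_mul.mp hindep
  have h1 : ∀ᵐ ω ∂(μ.trim hm), ∀ q : ℚ,
      condExpKernel μ m ω (W ⁻¹' Iic (q:ℝ) ∩ V ⁻¹' t)
        = condExpKernel μ m ω (W ⁻¹' Iic (q:ℝ)) * condExpKernel μ m ω (V ⁻¹' t) :=
    ae_all_iff.mpr fun q => h _ _ measurableSet_Iic ht
  have h2 := ae_of_ae_trim hm h1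
  filter_upwards [h2] with ω hω
  haveI : IsFiniteMeasure ((condExpKernel μ m ω (V ⁻¹' t)) •
      ((condExpKernel μ m ω).map W)) := by
    constructor
    rw [Measure.smul_apply, smul_eq_mul]
    exact ENNReal.mul_lt_top (measure_lt_top _ _) (measure_lt_top _ _)
  refine ext_of_generate_finite _
    (BorelSpace.measurable_eq.trans Real.borel_eq_generateFrom_Iic_rat)
    Real.isPiSystem_Iic_rat ?_ ?_
  · rintro s hs
    simp only [mem_iUnion, mem_singleton_iff] at hs
    obtain ⟨q, rfl⟩ := hs
    rw [Measure.map_apply hWm measurableSet_Iic,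
      Measure.restrict_apply (hWm measurableSet_Iic),
      Measure.smul_apply, Measure.map_apply hWm measurableSet_Iic, smul_eq_mul, hω q, mul_comm]
  · rw [Measure.map_apply hWm MeasurableSet.univ, Measure.smul_apply,
      Measure.map_apply hWm MeasurableSet.univ]
    simp [Measure.restrict_apply_univ]

lemma ipw_condexp_mul (μ : Measure Ω) [IsProbabilityMeasure μ]
    (hm : m ≤ mΩ)
    {W : Ω → ℝ} (hWm : Measurable W) (hWi : Integrable W μ)
    {V : Ω → ℝ × ℤ} (hVm : Measurable V)
    (hindep : CondIndepFun m hm W V μ)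
    {t : Set (ℝ × ℤ)} (ht : MeasurableSet t) :
    μ[fun ω => W ω * (V ⁻¹' t).indicator (fun _ => (1:ℝ)) ω | m]
      =ᵐ[μ] fun ω => (μ[W|m]) ω * (μ[(V ⁻¹' t).indicator (fun _ => (1:ℝ))|m]) ω := by
  have hA : MeasurableSet (V ⁻¹' t) := hVm ht
  have heq : (fun ω => W ω * (V ⁻¹' t).indicator (fun _ => (1:ℝ)) ω)
      = (V ⁻¹' t).indicator W := by
    funext ω
    by_cases hω : ω ∈ V ⁻¹' t <;> simp [hω]
  have hint : Integrable ((V ⁻¹' t).indicator W) μ := hWi.indicator hA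
  rw [heq]
  have h1 := condExp_ae_eq_integral_condExpKernel hm hint
  have h2 := condExp_ae_eq_integral_condExpKernel hm hWi
  have h3 := condExpKernel_ae_eq_condExp hm (μ := μ) hA
  have hker := ipw_kernel_eq μ hm hWm hVm hindep ht
  have h4 := hWi.condExpKernel_ae (m := m)
  filter_upwards [h1, h2, h3, hker, h4] with ω h1ω h2ω h3ω hkerω h4ω
  rw [h1ω, ← h2ω.symm, ← h3ω, measureReal_def]
  have : ∫ y, (V ⁻¹' t).indicator W y ∂(condExpKernel μ m ω)
      = (condExpKernel μ m ω (V ⁻¹' t)).toReal * ∫ y, W y ∂(condExpKernel μ m ω) := by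
    rw [integral_indicator hA]
    have e1 : ∫ y in V ⁻¹' t, W y ∂(condExpKernel μ m ω)
        = ∫ x, id x ∂(((condExpKernel μ m ω).restrict (V ⁻¹' t)).map W) := by
      rw [integral_map hWm.aemeasurable aestronglyMeasurable_id]
      simp
    have e2 : ∫ x, id x ∂((condExpKernel μ m ω).map W)
        = ∫ y, W y ∂(condExpKernel μ m ω) := by
      rw [integral_map hWm.aemeasurable aestronglyMeasurable_id]
      simp
    rw [e1, hkerω, integral_smul_measure, e2, smul_eq_mul]
  rw [this, mul_comm]

lemma ipw_aux (μ : Measure Ω) [IsProbabilityMeasure μ]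
    (hm : m ≤ mΩ)
    {W : Ω → ℝ} (hWm : Measurable W) (hWi : Integrable W μ)
    {V : Ω → ℝ × ℤ} (hVm : Measurable V)
    (hindep : CondIndepFun m hm W V μ)
    {t : Set (ℝ × ℤ)} (ht : MeasurableSet t)
    {g : Ω → ℝ}
    (hg : g =ᵐ[μ] μ[(V ⁻¹' t).indicator (fun _ => (1:ℝ)) | m])
    (hgpos : ∀ᵐ ω ∂μ, 0 < g ω) :
    Integrable (fun ω => W ω * (V ⁻¹' t).indicator (fun _ => (1:ℝ)) ω / g ω) μ ∧
    ∫ ω, W ω * (V ⁻¹' t).indicator (fun _ => (1:ℝ)) ω / g ω ∂μ = ∫ ω, W ω ∂μ := by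
  set A : Set Ω := V ⁻¹' t with hAdef
  have hA : MeasurableSet A := hVm ht
  set χ : Ω → ℝ := A.indicator (fun _ => (1:ℝ)) with hχdef
  have hχm : Measurable χ := measurable_const.indicator hA
  have hχ01 : ∀ ω, χ ω = 0 ∨ χ ω = 1 := by
    intro ω; by_cases hω : ω ∈ A <;> simp [hχdef, hω]
  have hχnn : ∀ ω, 0 ≤ χ ω := fun ω => by rcases hχ01 ω with h | h <;> simp [h]
  set G : Ω → ℝ := μ[χ | m] with hGdef
  have hGsm : StronglyMeasurable[m] G := stronglyMeasurable_condExp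
  have hGm : Measurable G := (hGsm.measurable).mono hm le_rfl
  have hGpos : ∀ᵐ ω ∂μ, 0 < G ω := by
    filter_upwards [hg, hgpos] with ω h1 h2
    rw [← h1]; exact h2
  -- integrability of W * χ
  have hWχeq : (fun ω => W ω * χ ω) = A.indicator W := by
    funext ω; by_cases hω : ω ∈ A <;> simp [hχdef, hω]
  have hWχi : Integrable (fun ω => W ω * χ ω) μ := by rw [hWχeq]; exact hWi.indicator hA
  set absW : Ω → ℝ := fun ω => |W ω| with habsWdef
  have habsχi : Integrable (fun ω => absW ω * χ ω) μ := by
    have : (fun ω => absW ω * χ ω) = A.indicator (fun ω => |W ω|) := by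
      funext ω; by_cases hω : ω ∈ A <;> simp [hχdef, hω, habsWdef]
    rw [this]; exact hWi.abs.indicator hA
  -- factorizations
  have hfact : μ[fun ω => W ω * χ ω | m] =ᵐ[μ] fun ω => (μ[W|m]) ω * G ω :=
    ipw_condexp_mul μ hm hWm hWi hVm hindep ht
  have hindep' : CondIndepFun m hm (fun ω => |W ω|) V μ := by
    have := hindep.comp (measurable_abs) (measurable_id (α := ℝ × ℤ))
    simpa [Function.comp_def] using this
  set F : Ω → ℝ := μ[absW | m] with hFdef
  have hfactabs : μ[fun ω => absW ω * χ ω | m]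
      =ᵐ[μ] fun ω => F ω * G ω :=
    ipw_condexp_mul μ hm hWm.abs hWi.abs hVm hindep' ht
  have hFnn : 0 ≤ᵐ[μ] F := condExp_nonneg (ae_of_all _ fun ω => abs_nonneg _)
  -- truncated multipliers
  set c : ℕ → Ω → ℝ := fun n ω => min (max (G ω)⁻¹ 0) n with hcdef
  have hcm : ∀ n, StronglyMeasurable[m] (c n) := fun n =>
    ((hGsm.measurable.inv.max measurable_const).min measurable_const).stronglyMeasurable
  have hcnn : ∀ n ω, 0 ≤ c n ω := fun n ω =>
    le_min (le_max_right _ _) (Nat.cast_nonneg n)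
  have hcbd : ∀ n ω, c n ω ≤ n := fun n ω => min_le_right _ _
  have hcprod_int : ∀ n, Integrable (fun ω => c n ω * (absW ω * χ ω)) μ := by
    intro n
    refine habsχi.bdd_mul (c := n) ?_ (ae_of_all _ fun ω => ?_)
    · exact (((hGm.inv.max measurable_const).min measurable_const)).aestronglyMeasurable
    · rw [Real.norm_eq_abs, abs_of_nonneg (hcnn n ω)]; exact hcbd n ω
  -- the truncated bound
  have hbound : ∀ n, ∫ ω, c n ω * (absW ω * χ ω) ∂μ ≤ ∫ ω, absW ω ∂μ := by
    intro n
    have e1 : ∫ ω, c n ω * (absW ω * χ ω) ∂μ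
        = ∫ ω, (μ[fun ω' => c n ω' * (absW ω' * χ ω')|m]) ω ∂μ :=
      (integral_condExp hm).symm
    have e2 : μ[fun ω' => c n ω' * (absW ω' * χ ω')|m]
        =ᵐ[μ] fun ω => c n ω * (μ[fun ω' => absW ω' * χ ω'|m]) ω := by
      have := condExp_mul_of_stronglyMeasurable_left (hcm n)
        (g := fun ω => absW ω * χ ω) (hcprod_int n) habsχi
      exact this
    have hle : (fun ω => c n ω * (μ[fun ω' => absW ω' * χ ω'|m]) ω) ≤ᵐ[μ] F := by
      filter_upwards [hfactabs, hGpos, hFnn] with ω h1 h2 h3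
      rw [h1]
      have hcG : c n ω * G ω ≤ 1 := by
        have hc_le : c n ω ≤ (G ω)⁻¹ := by
          rw [hcdef]
          simp only
          refine (min_le_left _ _).trans ?_
          rw [max_eq_left (inv_nonneg.mpr h2.le)]
        calc c n ω * G ω ≤ (G ω)⁻¹ * G ω :=
              mul_le_mul_of_nonneg_right hc_le h2.le
          _ = 1 := inv_mul_cancel₀ (ne_of_gt h2)
      calc c n ω * (F ω * G ω) = (c n ω * G ω) * F ω := by ring
        _ ≤ 1 * F ω := mul_le_mul_of_nonneg_right hcG h3
        _ = F ω := one_mul _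
    have hint1 : Integrable (fun ω => c n ω * (μ[fun ω' => absW ω' * χ ω'|m]) ω) μ := by
      refine integrable_condExp.bdd_mul (c := n) ?_ (ae_of_all _ fun ω => ?_)
      · exact (((hGm.inv.max measurable_const).min measurable_const)).aestronglyMeasurable
      · rw [Real.norm_eq_abs, abs_of_nonneg (hcnn n ω)]; exact hcbd n ω
    calc ∫ ω, c n ω * (absW ω * χ ω) ∂μ
        = ∫ ω, (μ[fun ω' => c n ω' * (absW ω' * χ ω')|m]) ω ∂μ := e1
      _ = ∫ ω, c n ω * (μ[fun ω' => absW ω' * χ ω'|m]) ω ∂μ := integral_congr_ae e2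
      _ ≤ ∫ ω, F ω ∂μ := integral_mono_ae hint1 integrable_condExp hle
      _ = ∫ ω, absW ω ∂μ := integral_condExp hm
  have hiSupnn : ∀ ω, 0 ≤ absW ω * χ ω := fun ω =>
    mul_nonneg (by simp [habsWdef, abs_nonneg]) (hχnn ω)
  have hmono : ∀ ω, Monotone (fun n : ℕ => ENNReal.ofReal (c n ω * (absW ω * χ ω))) := by
    intro ω n k hnk
    refine ENNReal.ofReal_le_ofReal (mul_le_mul_of_nonneg_right ?_ (hiSupnn ω))
    exact min_le_min le_rfl (Nat.cast_le.mpr hnk)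
  have hsup_eq : ∀ ω, (⨆ n : ℕ, ENNReal.ofReal (c n ω * (absW ω * χ ω)))
      = ENNReal.ofReal (max (G ω)⁻¹ 0 * (absW ω * χ ω)) := by
    intro ω
    refine le_antisymm (iSup_le fun n => ENNReal.ofReal_le_ofReal
      (mul_le_mul_of_nonneg_right (min_le_left _ _) (hiSupnn ω))) ?_
    refine le_iSup_of_le ⌈max (G ω)⁻¹ 0⌉₊ (le_of_eq ?_)
    congr 1
    simp only [hcdef]
    rw [min_eq_left (Nat.le_ceil _)]
  have habsWm : Measurable absW := hWm.abs
  have hlin : ∫⁻ ω, ENNReal.ofReal (max (G ω)⁻¹ 0 * (absW ω * χ ω)) ∂μ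
      ≤ ENNReal.ofReal (∫ ω, absW ω ∂μ) := by
    have hmeasn : ∀ n : ℕ, Measurable (fun ω => ENNReal.ofReal (c n ω * (absW ω * χ ω))) :=
      fun n => (((hGm.inv.max measurable_const).min measurable_const).mul
        (habsWm.mul hχm)).ennreal_ofReal
    calc ∫⁻ ω, ENNReal.ofReal (max (G ω)⁻¹ 0 * (absW ω * χ ω)) ∂μ
        = ∫⁻ ω, ⨆ n : ℕ, ENNReal.ofReal (c n ω * (absW ω * χ ω)) ∂μ :=
          lintegral_congr fun ω => (hsup_eq ω).symm
      _ = ⨆ n, ∫⁻ ω, ENNReal.ofReal (c n ω * (absW ω * χ ω)) ∂μ :=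
          lintegral_iSup hmeasn (by intro n k hnk ω; exact hmono ω hnk)
      _ ≤ ENNReal.ofReal (∫ ω, absW ω ∂μ) := by
          refine iSup_le fun n => ?_
          rw [← ofReal_integral_eq_lintegral_ofReal (hcprod_int n)
            (ae_of_all _ fun ω => mul_nonneg (hcnn n ω) (hiSupnn ω))]
          exact ENNReal.ofReal_le_ofReal (hbound n)
  have hintG : Integrable (fun ω => W ω * χ ω / G ω) μ := by
    refine ⟨((hWm.mul hχm).div hGm).aestronglyMeasurable, ?_⟩
    rw [hasFiniteIntegral_iff_norm]
    have hcong : ∀ᵐ ω ∂μ, ENNReal.ofReal ‖W ω * χ ω / G ω‖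
        = ENNReal.ofReal (max (G ω)⁻¹ 0 * (absW ω * χ ω)) := by
      filter_upwards [hGpos] with ω hG
      rw [max_eq_left (inv_nonneg.mpr hG.le)]
      congr 1
      simp only [habsWdef]
      rw [Real.norm_eq_abs, abs_div, abs_mul, abs_of_pos hG, abs_of_nonneg (hχnn ω),
        div_eq_mul_inv]
      ring
    calc ∫⁻ ω, ENNReal.ofReal ‖W ω * χ ω / G ω‖ ∂μ
        = ∫⁻ ω, ENNReal.ofReal (max (G ω)⁻¹ 0 * (absW ω * χ ω)) ∂μ := lintegral_congr_ae hcong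
      _ ≤ ENNReal.ofReal (∫ ω, absW ω ∂μ) := hlin
      _ < ⊤ := ENNReal.ofReal_lt_top
  have hae_gG : (fun ω => W ω * χ ω / G ω) =ᵐ[μ] fun ω => W ω * χ ω / g ω := by
    filter_upwards [hg] with ω h; rw [h]
  have hint : Integrable (fun ω => W ω * χ ω / g ω) μ := hintG.congr hae_gG
  refine ⟨hint, ?_⟩
  have hGinv_sm : StronglyMeasurable[m] (fun ω => (G ω)⁻¹) :=
    (hGsm.measurable.inv).stronglyMeasurable
  have hintG' : Integrable (fun ω => (G ω)⁻¹ * (W ω * χ ω)) μ := by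
    refine hintG.congr (ae_of_all _ fun ω => ?_)
    show W ω * χ ω / G ω = (G ω)⁻¹ * (W ω * χ ω)
    rw [div_eq_mul_inv]; ring
  have e2 : μ[fun ω => (G ω)⁻¹ * (W ω * χ ω)|m]
      =ᵐ[μ] fun ω => (G ω)⁻¹ * (μ[fun ω' => W ω' * χ ω'|m]) ω :=
    condExp_mul_of_stronglyMeasurable_left hGinv_sm hintG' hWχi
  have e3 : (fun ω => (G ω)⁻¹ * (μ[fun ω' => W ω' * χ ω'|m]) ω) =ᵐ[μ] μ[W|m] := by
    filter_upwards [hfact, hGpos] with ω h1 h2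
    rw [h1, mul_comm ((μ[W|m]) ω), ← mul_assoc, inv_mul_cancel₀ (ne_of_gt h2), one_mul]
  calc ∫ ω, W ω * χ ω / g ω ∂μ
      = ∫ ω, (G ω)⁻¹ * (W ω * χ ω) ∂μ := by
        refine integral_congr_ae ?_
        filter_upwards [hg] with ω h
        rw [h, div_eq_mul_inv]; ring
    _ = ∫ ω, (μ[fun ω' => (G ω')⁻¹ * (W ω' * χ ω')|m]) ω ∂μ := (integral_condExp hm).symm
    _ = ∫ ω, (G ω)⁻¹ * (μ[fun ω' => W ω' * χ ω'|m]) ω ∂μ := integral_congr_ae e2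
    _ = ∫ ω, (μ[W|m]) ω ∂μ := integral_congr_ae e3
    _ = ∫ ω, W ω ∂μ := integral_condExp hm

end IPWAux


/-- Identification and decomposition of the total effect under interference: the total
effect `Δ(z,z')` is identified by inverse probability weighting with the conditional
propensity score, and decomposes into the direct effect `γ(z)` plus the interference
effect `δ(0,z,z')`. -/
theorem stmt_13 {Ω : Type*} [MeasurableSpace Ω] [StandardBorelSpace Ω]
    (P : Measure Ω) [IsProbabilityMeasure P]
    (Y : Ω → ℝ) (D : Ω → ℝ) (Z : Ω → ℤ) (X : Ω → ℝ) (z z' : ℤ) (hzz' : z ≠ z')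
    (hY : Measurable Y) (hD : Measurable D) (hZ : Measurable Z) (hX : Measurable X)
    (hDbin : ∀ ω, D ω = 0 ∨ D ω = 1)
    (hYint : Integrable Y P)
    (Ypo : ℝ → ℤ → Ω → ℝ)
    (hYpoMeas : ∀ d ζ, Measurable (Ypo d ζ))
    (hYpoInt : ∀ d ζ, Integrable (Ypo d ζ) P)
    -- consistency
    (hcons : ∀ d ζ ω, D ω = d → Z ω = ζ → Y ω = Ypo d ζ ω)
    -- conditional exogeneity  Y(d,ζ) ⟂ (D,Z) | X
    (hcondindep : ∀ d ∈ ({0, 1} : Set ℝ), ∀ ζ ∈ ({z, z'} : Set ℤ),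
      CondIndepFun (MeasurableSpace.comap X inferInstance) hX.comap_le
        (Ypo d ζ) (fun ω => (D ω, Z ω)) P)
    -- common support: true propensity scores p(d,ζ|X), a.s. positive
    (ps : ℝ → ℤ → Ω → ℝ)
    (hps : ∀ d ζ, ps d ζ =ᵐ[P]
      P[({ω' | D ω' = d ∧ Z ω' = ζ}).indicator (fun _ => (1 : ℝ))
        | MeasurableSpace.comap X inferInstance])
    (hpos : ∀ d ∈ ({0, 1} : Set ℝ), ∀ ζ ∈ ({z, z'} : Set ℤ), ∀ᵐ ω ∂P, 0 < ps d ζ ω) :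
    (∫ ω, (Ypo 1 z ω - Ypo 0 z' ω) ∂P
        = ∫ ω, Y ω * D ω * ({ω' | Z ω' = z}).indicator (fun _ => (1 : ℝ)) ω / ps 1 z ω
            - Y ω * (1 - D ω) * ({ω' | Z ω' = z'}).indicator (fun _ => (1 : ℝ)) ω
              / ps 0 z' ω ∂P)
    ∧ (∫ ω, (Ypo 1 z ω - Ypo 0 z' ω) ∂P
        = (∫ ω, (Ypo 1 z ω - Ypo 0 z ω) ∂P) + ∫ ω, (Ypo 0 z ω - Ypo 0 z' ω) ∂P) := by

  have hm : MeasurableSpace.comap X inferInstance ≤ _ := hX.comap_le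
  have hVm : Measurable (fun ω => (D ω, Z ω)) := hD.prodMk hZ
  have hset : ∀ (d : ℝ) (ζ : ℤ),
      (fun ω => (D ω, Z ω)) ⁻¹' {(d, ζ)} = {ω' | D ω' = d ∧ Z ω' = ζ} := by
    intro d ζ; ext ω; simp [Prod.ext_iff]
  have h1mem : (1 : ℝ) ∈ ({0, 1} : Set ℝ) := by simp
  have h0mem : (0 : ℝ) ∈ ({0, 1} : Set ℝ) := by simp
  have hzmem : z ∈ ({z, z'} : Set ℤ) := by simp
  have hz'mem : z' ∈ ({z, z'} : Set ℤ) := by simp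
  have hg1 : ps 1 z =ᵐ[P]
      P[((fun ω => (D ω, Z ω)) ⁻¹' {((1:ℝ), z)}).indicator (fun _ => (1:ℝ))
        | MeasurableSpace.comap X inferInstance] := by
    have := hps 1 z
    rwa [← hset 1 z] at this
  have hg0 : ps 0 z' =ᵐ[P]
      P[((fun ω => (D ω, Z ω)) ⁻¹' {((0:ℝ), z')}).indicator (fun _ => (1:ℝ))
        | MeasurableSpace.comap X inferInstance] := by
    have := hps 0 z'
    rwa [← hset 0 z'] at this
  have h1 := ipw_aux P hm (hYpoMeas 1 z) (hYpoInt 1 z) hVm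
    (hcondindep 1 h1mem z hzmem) (measurableSet_singleton ((1:ℝ), z)) hg1
    (hpos 1 h1mem z hzmem)
  have h0 := ipw_aux P hm (hYpoMeas 0 z') (hYpoInt 0 z') hVm
    (hcondindep 0 h0mem z' hz'mem) (measurableSet_singleton ((0:ℝ), z')) hg0
    (hpos 0 h0mem z' hz'mem)
  have hptw : ∀ ω,
      Y ω * D ω * ({ω' | Z ω' = z}).indicator (fun _ => (1 : ℝ)) ω / ps 1 z ω
        - Y ω * (1 - D ω) * ({ω' | Z ω' = z'}).indicator (fun _ => (1 : ℝ)) ω / ps 0 z' ω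
      = Ypo 1 z ω * ((fun ω => (D ω, Z ω)) ⁻¹' {((1:ℝ), z)}).indicator (fun _ => (1:ℝ)) ω
          / ps 1 z ω
        - Ypo 0 z' ω * ((fun ω => (D ω, Z ω)) ⁻¹' {((0:ℝ), z')}).indicator (fun _ => (1:ℝ)) ω
          / ps 0 z' ω := by
    intro ω
    have hnum1 : Y ω * D ω * ({ω' | Z ω' = z}).indicator (fun _ => (1 : ℝ)) ω
        = Ypo 1 z ω * ((fun ω => (D ω, Z ω)) ⁻¹' {((1:ℝ), z)}).indicator (fun _ => (1:ℝ)) ω := by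
      rcases hDbin ω with hd | hd
      · by_cases hz : Z ω = z <;>
          simp [Set.indicator_apply, hd, hz, Prod.ext_iff]
      · by_cases hz : Z ω = z
        · have hY1 := hcons 1 z ω hd hz
          simp [Set.indicator_apply, hd, hz, Prod.ext_iff, hY1]
        · simp [Set.indicator_apply, hd, hz, Prod.ext_iff]
    have hnum0 : Y ω * (1 - D ω) * ({ω' | Z ω' = z'}).indicator (fun _ => (1 : ℝ)) ω
        = Ypo 0 z' ω * ((fun ω => (D ω, Z ω)) ⁻¹' {((0:ℝ), z')}).indicator (fun _ => (1:ℝ)) ω := by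
      rcases hDbin ω with hd | hd
      · by_cases hz : Z ω = z'
        · have hY0 := hcons 0 z' ω hd hz
          simp [Set.indicator_apply, hd, hz, Prod.ext_iff, hY0]
        · simp [Set.indicator_apply, hd, hz, Prod.ext_iff]
      · by_cases hz : Z ω = z' <;>
          simp [Set.indicator_apply, hd, hz, Prod.ext_iff]
    rw [hnum1, hnum0]
  constructor
  · have hR : ∫ ω, (Y ω * D ω * ({ω' | Z ω' = z}).indicator (fun _ => (1 : ℝ)) ω / ps 1 z ω
        - Y ω * (1 - D ω) * ({ω' | Z ω' = z'}).indicator (fun _ => (1 : ℝ)) ω / ps 0 z' ω) ∂P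
        = ∫ ω, (Ypo 1 z ω * ((fun ω => (D ω, Z ω)) ⁻¹' {((1:ℝ), z)}).indicator
              (fun _ => (1:ℝ)) ω / ps 1 z ω
          - Ypo 0 z' ω * ((fun ω => (D ω, Z ω)) ⁻¹' {((0:ℝ), z')}).indicator
              (fun _ => (1:ℝ)) ω / ps 0 z' ω) ∂P :=
      integral_congr_ae (ae_of_all _ hptw)
    rw [hR, integral_sub h1.1 h0.1, h1.2, h0.2,
      integral_sub (hYpoInt 1 z) (hYpoInt 0 z')]
  · rw [integral_sub (hYpoInt 1 z) (hYpoInt 0 z'), integral_sub (hYpoInt 1 z) (hYpoInt 0 z),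
      integral_sub (hYpoInt 0 z) (hYpoInt 0 z')]
    ring
end

section
/- Let Y be integrable and Ż, Z̃ finitely supported discrete random variables with P(Ż = ż, Z̃ = z̃) > 0 for all ż, z̃ in their supports. Then Y is mean-independent of Z̃ conditional on Ż (i.e., E[Y | Ż, Z̃] = E[Y | Ż] a.s.) if and only if for every ż and every measurable subset B of the support of Z̃ with P(Z̃ ∈ B | Ż = ż) ∈ (0,1), E[Y | Ż = ż, Z̃ ∈ B] = E[Y | Ż = ż, Z̃ ∉ B]. -/
open MeasureTheory ProbabilityTheory Set

section Aux
set_option linter.unusedSectionVars false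
variable {Ω : Type*} [MeasurableSpace Ω]

/-- A function strongly measurable w.r.t. the comap σ-algebra is constant on fibers. -/
lemma aux_fiber_const {γ : Type*} [MeasurableSpace γ] {f : Ω → γ} {g : Ω → ℝ}
    (hg : StronglyMeasurable[MeasurableSpace.comap f inferInstance] g)
    {ω₁ ω₂ : Ω} (h : f ω₁ = f ω₂) : g ω₁ = g ω₂ := by
  have hgm : Measurable[MeasurableSpace.comap f inferInstance] g := hg.measurable
  obtain ⟨t, -, ht⟩ := hgm (measurableSet_singleton (g ω₁))
  have h1 : ω₁ ∈ f ⁻¹' t := by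
    rw [ht]; exact rfl
  have h2 : ω₂ ∈ f ⁻¹' t := by
    simpa [Set.mem_preimage, ← h] using h1
  rw [ht] at h2
  exact h2.symm

/-- Value of a conditional expectation w.r.t. a discrete σ-algebra on an atom. -/
lemma aux_condexp_atom {Ω γ : Type*} {m0 : MeasurableSpace Ω}
    [MeasurableSpace γ] [MeasurableSingletonClass γ]
    (P : Measure Ω) [IsProbabilityMeasure P] {f : Ω → γ} (hf : Measurable f)
    {Y : Ω → ℝ} (hYint : Integrable Y P) {c : γ} {ω : Ω} (hω : f ω = c) :
    (P[Y | MeasurableSpace.comap f inferInstance]) ω * (P (f ⁻¹' {c})).toReal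
      = ∫ x in f ⁻¹' {c}, Y x ∂P := by
  have hm : MeasurableSpace.comap f inferInstance ≤ m0 := hf.comap_le
  have hs : MeasurableSet[MeasurableSpace.comap f inferInstance] (f ⁻¹' {c}) :=
    ⟨{c}, measurableSet_singleton c, rfl⟩
  have h1 : ∫ x in f ⁻¹' {c}, (P[Y | MeasurableSpace.comap f inferInstance]) x ∂P
      = ∫ x in f ⁻¹' {c}, Y x ∂P :=
    setIntegral_condExp hm hYint hs
  have hconst : ∀ x ∈ f ⁻¹' {c},
      (P[Y | MeasurableSpace.comap f inferInstance]) x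
        = (P[Y | MeasurableSpace.comap f inferInstance]) ω := fun x hx =>
    aux_fiber_const stronglyMeasurable_condExp (show f x = f ω by rw [hx, hω])
  rw [setIntegral_congr_fun (hm _ hs) hconst, setIntegral_const, smul_eq_mul] at h1
  rw [mul_comm]; exact h1

lemma aux_integral_cond (P : Measure Ω) (Y : Ω → ℝ) (s : Set Ω) :
    ∫ ω, Y ω ∂(P[|s]) = (P s).toReal⁻¹ * ∫ x in s, Y x ∂P := by
  rw [ProbabilityTheory.cond, integral_smul_measure, ENNReal.toReal_inv, smul_eq_mul]

end Aux

/-- Equivalence between conditional mean independence `E[Y | Ż, Z̃] = E[Y | Ż]` and the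
partition-cell formulation used in the aggregated test statistic: conditional means of
`Y` agree across any cell `B` of the support of `Z̃` and its complement, given `Ż`. -/
theorem stmt_14 {Ω : Type*} [MeasurableSpace Ω] (P : Measure Ω) [IsProbabilityMeasure P]
    {α β : Type*} [Fintype α] [MeasurableSpace α] [MeasurableSingletonClass α]
    [Fintype β] [MeasurableSpace β] [MeasurableSingletonClass β]
    (Y : Ω → ℝ) (Zd : Ω → α) (Zt : Ω → β)
    (hY : Measurable Y) (hZd : Measurable Zd) (hZt : Measurable Zt)
    (hYint : Integrable Y P)
    -- common support: every pair of support points occurs with positive probability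
    (hsupp : ∀ (zd : α) (zt : β), 0 < P {ω | Zd ω = zd} → 0 < P {ω | Zt ω = zt} →
      0 < P {ω | Zd ω = zd ∧ Zt ω = zt}) :
    (P[Y | MeasurableSpace.comap (fun ω => (Zd ω, Zt ω)) inferInstance]
        =ᵐ[P] P[Y | MeasurableSpace.comap Zd inferInstance])
      ↔ ∀ (zd : α), 0 < P {ω | Zd ω = zd} →
          ∀ B : Set β, MeasurableSet B → B ⊆ {b | 0 < P {ω | Zt ω = b}} →
            0 < (P[|{ω | Zd ω = zd}]) (Zt ⁻¹' B) →
            (P[|{ω | Zd ω = zd}]) (Zt ⁻¹' B) < 1 →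
            ∫ ω, Y ω ∂(P[|{ω | Zd ω = zd ∧ Zt ω ∈ B}])
              = ∫ ω, Y ω ∂(P[|{ω | Zd ω = zd ∧ Zt ω ∉ B}]) := by
  classical
  have hF : Measurable (fun ω => (Zd ω, Zt ω)) := hZd.prodMk hZt
  set F : Ω → α × β := fun ω => (Zd ω, Zt ω) with hFdef
  have hm1 : MeasurableSpace.comap F inferInstance ≤ ‹MeasurableSpace Ω› := hF.comap_le
  have hm2 : MeasurableSpace.comap Zd inferInstance ≤ ‹MeasurableSpace Ω› := hZd.comap_le
  set g1 := P[Y | MeasurableSpace.comap F inferInstance] with hg1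
  set g2 := P[Y | MeasurableSpace.comap Zd inferInstance] with hg2
  constructor
  · -- forward
    intro hae zd hzd B hB hBsupp hpos hlt
    have hAset : {ω | Zd ω = zd} = Zd ⁻¹' {zd} := rfl
    set A : Set Ω := Zd ⁻¹' {zd} with hAdef
    have hAmeas : MeasurableSet A := hZd (measurableSet_singleton zd)
    have hA0 : P A ≠ 0 := by rw [← hAset]; exact hzd.ne'
    -- the two cells
    set S : Set Ω := A ∩ Zt ⁻¹' B with hSdef
    set S' : Set Ω := A ∩ (Zt ⁻¹' B)ᶜ with hS'def
    have hSset : {ω | Zd ω = zd ∧ Zt ω ∈ B} = S := rfl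
    have hS'set : {ω | Zd ω = zd ∧ Zt ω ∉ B} = S' := rfl
    have hScond : (P[|A]) (Zt ⁻¹' B) = (P A)⁻¹ * P S := cond_apply hAmeas P _
    have hS0 : P S ≠ 0 := by
      intro h0
      rw [hAset] at hpos
      rw [hScond, h0, mul_zero] at hpos
      exact lt_irrefl _ hpos
    have : IsProbabilityMeasure (P[|A]) := cond_isProbabilityMeasure hA0
    have hS'0 : P S' ≠ 0 := by
      intro h0
      have hcompl : (P[|A]) (Zt ⁻¹' B)ᶜ = 1 - (P[|A]) (Zt ⁻¹' B) :=
        prob_compl_eq_one_sub (hZt hB)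
      have : (P[|A]) (Zt ⁻¹' B)ᶜ = 0 := by
        rw [cond_apply hAmeas, h0, mul_zero]
      rw [hcompl] at this
      rw [hAset] at hlt
      have := tsub_eq_zero_iff_le.mp this
      exact absurd this (not_le.mpr hlt)
    -- constant value of g2 on A
    obtain ⟨ω₀, hω₀⟩ := nonempty_of_measure_ne_zero hA0
    set c : ℝ := g2 ω₀ with hcdef
    have h2const : ∀ x ∈ A, g2 x = c := fun x hx =>
      aux_fiber_const stronglyMeasurable_condExp (show Zd x = Zd ω₀ by
        rw [Set.mem_preimage, Set.mem_singleton_iff] at hx hω₀; rw [hx, hω₀])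
    -- key: for any m1-measurable subset s of A, ∫_s Y = c * μ s
    have key : ∀ s : Set Ω, MeasurableSet[MeasurableSpace.comap F inferInstance] s → s ⊆ A →
        ∫ x in s, Y x ∂P = c * (P s).toReal := by
      intro s hsm hsA
      have e1 : ∫ x in s, g1 x ∂P = ∫ x in s, Y x ∂P := setIntegral_condExp hm1 hYint hsm
      have e2 : ∫ x in s, g1 x ∂P = ∫ x in s, g2 x ∂P :=
        integral_congr_ae (ae_restrict_of_ae hae)
      have e3 : ∫ x in s, g2 x ∂P = c * (P s).toReal := by
        rw [setIntegral_congr_fun (hm1 _ hsm) (fun x hx => h2const x (hsA hx)),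
          setIntegral_const, smul_eq_mul, mul_comm, measureReal_def]
      rw [← e1, e2, e3]
    have hSm : MeasurableSet[MeasurableSpace.comap F inferInstance] S :=
      ⟨{zd} ×ˢ B, (measurableSet_singleton zd).prod hB, by
        ext ω
        simp only [F, Set.mem_preimage, Set.mem_prod, Set.mem_singleton_iff, hSdef,
          Set.mem_inter_iff]
        tauto⟩
    have hS'm : MeasurableSet[MeasurableSpace.comap F inferInstance] S' :=
      ⟨{zd} ×ˢ Bᶜ, (measurableSet_singleton zd).prod hB.compl, by
        ext ω
        simp only [F, Set.mem_preimage, Set.mem_prod, Set.mem_singleton_iff, hS'def,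
          Set.mem_inter_iff, Set.mem_compl_iff]
        tauto⟩
    have hSfin : P S ≠ ⊤ := (measure_lt_top P S).ne
    have hS'fin : P S' ≠ ⊤ := (measure_lt_top P S').ne
    rw [hSset, hS'set, aux_integral_cond, aux_integral_cond,
      key S hSm Set.inter_subset_left, key S' hS'm Set.inter_subset_left]
    rw [inv_mul_eq_div, inv_mul_eq_div, mul_div_assoc, mul_div_assoc,
      div_self (ENNReal.toReal_ne_zero.mpr ⟨hS0, hSfin⟩),
      div_self (ENNReal.toReal_ne_zero.mpr ⟨hS'0, hS'fin⟩)]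
  · -- backward
    intro hRHS
    have hptwise : ∀ ω : Ω, P (F ⁻¹' {F ω}) ≠ 0 → g1 ω = g2 ω := by
      intro ω hω
      set zd := Zd ω with hzd
      set zt := Zt ω with hzt
      set A : Set Ω := Zd ⁻¹' {zd} with hAdef
      set T : Set Ω := Zt ⁻¹' {zt} with hTdef
      have hAT : F ⁻¹' {F ω} = A ∩ T := by
        ext x; simp [F, Prod.ext_iff, hAdef, hTdef, Set.mem_preimage, hzd, hzt]
      have hAmeas : MeasurableSet A := hZd (measurableSet_singleton zd)
      have hTmeas : MeasurableSet T := hZt (measurableSet_singleton zt)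
      rw [hAT] at hω
      have hA0 : P A ≠ 0 := fun h =>
        hω (measure_mono_null Set.inter_subset_left h)
      have hT0 : P T ≠ 0 := fun h =>
        hω (measure_mono_null Set.inter_subset_right h)
      have hATfin : P (A ∩ T) ≠ ⊤ := (measure_lt_top P _).ne
      have hAfin : P A ≠ ⊤ := (measure_lt_top P _).ne
      -- the claim in real numbers
      have claim : (∫ x in A ∩ T, Y x ∂P) * (P A).toReal
          = (∫ x in A, Y x ∂P) * (P (A ∩ T)).toReal := by
        have hsplitI : (∫ x in A ∩ T, Y x ∂P) + (∫ x in A \ T, Y x ∂P) = ∫ x in A, Y x ∂P :=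
          integral_inter_add_diff hTmeas hYint.integrableOn
        have hsplitM : P (A ∩ T) + P (A \ T) = P A := measure_inter_add_diff A hTmeas
        have hsplitM' : (P (A ∩ T)).toReal + (P (A \ T)).toReal = (P A).toReal := by
          rw [← ENNReal.toReal_add hATfin (measure_lt_top P _).ne, hsplitM]
        by_cases hdiff : P (A \ T) = 0
        · have hI : ∫ x in A \ T, Y x ∂P = 0 := by
            rw [Measure.restrict_eq_zero.mpr hdiff, integral_zero_measure]
          have hM : (P (A \ T)).toReal = 0 := by rw [hdiff]; rfl
          rw [← hsplitI, hI, add_zero, ← hsplitM', hM, add_zero]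
        · -- apply the hypothesis with B = {zt}
          have hAset : {ω' | Zd ω' = zd} = A := rfl
          have hApos : 0 < P {ω' | Zd ω' = zd} := by
            rw [hAset]; exact pos_iff_ne_zero.mpr hA0
          have hBsupp : ({zt} : Set β) ⊆ {b | 0 < P {ω' | Zt ω' = b}} := by
            intro b hb
            rw [Set.mem_singleton_iff] at hb
            subst hb
            exact pos_iff_ne_zero.mpr hT0
          have hcond_eq : (P[|{ω' | Zd ω' = zd}]) (Zt ⁻¹' {zt}) = (P A)⁻¹ * P (A ∩ T) := by
            rw [hAset]; exact cond_apply hAmeas P _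
          have hpos : 0 < (P[|{ω' | Zd ω' = zd}]) (Zt ⁻¹' {zt}) := by
            rw [hcond_eq]
            exact ENNReal.mul_pos (ENNReal.inv_ne_zero.mpr hAfin) hω
          have hlt : (P[|{ω' | Zd ω' = zd}]) (Zt ⁻¹' {zt}) < 1 := by
            rw [hcond_eq]
            have : IsProbabilityMeasure (P[|A]) := cond_isProbabilityMeasure hA0
            have hle : (P[|A]) T ≤ 1 := prob_le_one
            have hne : (P[|A]) T ≠ 1 := by
              intro h1
              have hcompl : (P[|A]) Tᶜ = 1 - (P[|A]) T := prob_compl_eq_one_sub hTmeas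
              rw [h1, tsub_self] at hcompl
              have : (P A)⁻¹ * P (A ∩ Tᶜ) = 0 := by rw [← cond_apply hAmeas]; exact hcompl
              rcases mul_eq_zero.mp this with h | h
              · exact (ENNReal.inv_ne_zero.mpr hAfin) h
              · exact hdiff (by rwa [Set.diff_eq])
            have := cond_apply hAmeas P T
            rw [← this]
            exact lt_of_le_of_ne hle hne
          have heq := hRHS zd hApos {zt} (measurableSet_singleton zt) hBsupp hpos hlt
          have hSet1 : {ω' | Zd ω' = zd ∧ Zt ω' ∈ ({zt} : Set β)} = A ∩ T := by
            ext x; simp [hAdef, hTdef]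
          have hSet2 : {ω' | Zd ω' = zd ∧ Zt ω' ∉ ({zt} : Set β)} = A \ T := by
            ext x; simp [hAdef, hTdef, Set.mem_diff]
          rw [hSet1, hSet2, aux_integral_cond, aux_integral_cond] at heq
          have hμ1 : (P (A ∩ T)).toReal ≠ 0 := ENNReal.toReal_ne_zero.mpr ⟨hω, hATfin⟩
          have hμ2 : (P (A \ T)).toReal ≠ 0 :=
            ENNReal.toReal_ne_zero.mpr ⟨hdiff, (measure_lt_top P _).ne⟩
          rw [inv_mul_eq_div, inv_mul_eq_div, div_eq_div_iff hμ1 hμ2] at heq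
          -- heq : I₁ * μ₂ = I₂ * μ₁
          rw [← hsplitI, ← hsplitM']
          linear_combination heq
      -- conclude from values on atoms
      have v1 : g1 ω * (P (A ∩ T)).toReal = ∫ x in A ∩ T, Y x ∂P := by
        have := aux_condexp_atom P hF hYint (c := F ω) (ω := ω) rfl
        rwa [hAT] at this
      have v2 : g2 ω * (P A).toReal = ∫ x in A, Y x ∂P :=
        aux_condexp_atom P hZd hYint (c := zd) (ω := ω) rfl
      have hμ1 : (P (A ∩ T)).toReal ≠ 0 := ENNReal.toReal_ne_zero.mpr ⟨hω, hATfin⟩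
      have hμ2 : (P A).toReal ≠ 0 := ENNReal.toReal_ne_zero.mpr ⟨hA0, hAfin⟩
      have : g1 ω * ((P (A ∩ T)).toReal * (P A).toReal)
          = g2 ω * ((P (A ∩ T)).toReal * (P A).toReal) := by
        linear_combination (P A).toReal * v1 - (P (A ∩ T)).toReal * v2 + claim
      exact mul_right_cancel₀ (mul_ne_zero hμ1 hμ2) this
    -- null set argument
    have hsub : {ω | g1 ω ≠ g2 ω} ⊆ {ω | P (F ⁻¹' {F ω}) = 0} := by
      intro ω hω
      by_contra h
      exact hω (hptwise ω h)
    have hN : P {ω | P (F ⁻¹' {F ω}) = 0} = 0 := by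
      have hcover : {ω | P (F ⁻¹' {F ω}) = 0} ⊆
          ⋃ p : α × β, {ω | P (F ⁻¹' {F ω}) = 0} ∩ F ⁻¹' {p} := by
        intro ω hω
        exact Set.mem_iUnion.mpr ⟨F ω, hω, rfl⟩
      refine measure_mono_null hcover (measure_iUnion_null fun p => ?_)
      by_cases hp : P (F ⁻¹' {p}) = 0
      · exact measure_mono_null Set.inter_subset_right hp
      · have : {ω | P (F ⁻¹' {F ω}) = 0} ∩ F ⁻¹' {p} = ∅ := by
          ext ω
          simp only [Set.mem_inter_iff, Set.mem_setOf_eq, Set.mem_preimage,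
            Set.mem_singleton_iff, Set.mem_empty_iff_false, iff_false, not_and]
          intro h0 hFp
          rw [hFp] at h0
          exact hp h0
        rw [this]; exact measure_empty
    exact measure_mono_null hsub hN
end
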